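/- arXiv:1905.02469 — 6 statements merged into one kernel-verified Lean document; each statement's English description precedes it below -/
import Mathlib

section
/- For any matrix A ∈ ℝⁿˣⁿ and any vector y ∈ ℝⁿ: (1/√n)·‖Aᵀy‖₁ ≤ ‖Aᵀy‖₂ ≤ ‖Aᵀy‖₁. Consequently, if (x̂, ŷ) minimizes Cᵀx + c̲ᵀy + ‖Aᵀy‖₁ over a set Z and (x*, y*) minimizes Cᵀx + c̲ᵀy + ‖Aᵀy‖₂ over Z, with C, c̲ nonnegative and all feasible x, y nonnegative, then Cᵀx̂ + c̲ᵀŷ + ‖Aᵀŷ‖₂ ≤ √n · (Cᵀx* + c̲ᵀy* + ‖Aᵀy*‖₂). -/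
lemma l2_le_l1 (n : ℕ) (v : Fin n → ℝ) :
    Real.sqrt (∑ j, v j ^ 2) ≤ ∑ j, |v j| := by
  rw [show Real.sqrt (∑ j, v j ^ 2) = Real.sqrt (∑ j, |v j| ^ 2) by
    simp [sq_abs]]
  calc Real.sqrt (∑ j, |v j| ^ 2) ≤ Real.sqrt ((∑ j, |v j|) ^ 2) := by
        apply Real.sqrt_le_sqrt
        exact Finset.sum_sq_le_sq_sum_of_nonneg (fun i _ => abs_nonneg _)
    _ = ∑ j, |v j| := Real.sqrt_sq (Finset.sum_nonneg fun i _ => abs_nonneg _)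

lemma l1_le_sqrt_l2 (n : ℕ) (v : Fin n → ℝ) :
    ∑ j, |v j| ≤ Real.sqrt n * Real.sqrt (∑ j, v j ^ 2) := by
  have h := sq_sum_le_card_mul_sum_sq (s := (Finset.univ : Finset (Fin n)))
    (f := fun j => |v j|)
  simp only [Finset.card_univ, Fintype.card_fin, sq_abs] at h
  have h1 : (∑ j, |v j|) = Real.sqrt ((∑ j, |v j|) ^ 2) :=
    (Real.sqrt_sq (Finset.sum_nonneg fun i _ => abs_nonneg _)).symm
  rw [h1, ← Real.sqrt_mul (Nat.cast_nonneg n)]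
  exact Real.sqrt_le_sqrt h

/-- Norm comparison `(1/√n)·‖Aᵀy‖₁ ≤ ‖Aᵀy‖₂ ≤ ‖Aᵀy‖₁`, and the resulting
`√n`-approximation: if `(x̂, ŷ)` minimizes the ℓ₁-objective over `Z` and
`(x*, y*)` minimizes the ℓ₂-objective over `Z`, then the ℓ₂-value of
`(x̂, ŷ)` is at most `√n` times the optimum. -/
theorem stmt6 (n : ℕ) (A : Fin n → Fin n → ℝ) (C cb : Fin n → ℝ)
    (Z : Set ((Fin n → ℝ) × (Fin n → ℝ)))
    (hC : ∀ i, 0 ≤ C i) (hcb : ∀ i, 0 ≤ cb i)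
    (hZnn : ∀ p ∈ Z, ∀ i, 0 ≤ p.1 i ∧ 0 ≤ p.2 i)
    (xh yh xs ys : Fin n → ℝ)
    (hmem1 : (xh, yh) ∈ Z) (hmem2 : (xs, ys) ∈ Z)
    (hopt1 : ∀ p ∈ Z,
      (∑ i, C i * xh i) + (∑ i, cb i * yh i) + (∑ j, |∑ i, A i j * yh i|) ≤
        (∑ i, C i * p.1 i) + (∑ i, cb i * p.2 i) + (∑ j, |∑ i, A i j * p.2 i|))
    (hopt2 : ∀ p ∈ Z,
      (∑ i, C i * xs i) + (∑ i, cb i * ys i)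
          + Real.sqrt (∑ j, (∑ i, A i j * ys i) ^ 2) ≤
        (∑ i, C i * p.1 i) + (∑ i, cb i * p.2 i)
          + Real.sqrt (∑ j, (∑ i, A i j * p.2 i) ^ 2)) :
    (∀ y : Fin n → ℝ,
      (1 / Real.sqrt n) * (∑ j, |∑ i, A i j * y i|) ≤
          Real.sqrt (∑ j, (∑ i, A i j * y i) ^ 2) ∧
        Real.sqrt (∑ j, (∑ i, A i j * y i) ^ 2) ≤ ∑ j, |∑ i, A i j * y i|) ∧
    (∑ i, C i * xh i) + (∑ i, cb i * yh i)
        + Real.sqrt (∑ j, (∑ i, A i j * yh i) ^ 2) ≤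
      Real.sqrt n *
        ((∑ i, C i * xs i) + (∑ i, cb i * ys i)
          + Real.sqrt (∑ j, (∑ i, A i j * ys i) ^ 2)) := by
  constructor
  · intro y
    refine ⟨?_, l2_le_l1 n _⟩
    rcases Nat.eq_zero_or_pos n with rfl | hn
    · simp
    · have hsn : 0 < Real.sqrt n := Real.sqrt_pos.mpr (by positivity)
      rw [div_mul_eq_mul_div, one_mul, div_le_iff₀ hsn, mul_comm]
      exact l1_le_sqrt_l2 n _
  · rcases Nat.eq_zero_or_pos n with rfl | hn
    · simp
    have hsn1 : 1 ≤ Real.sqrt n := by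
      rw [show (1:ℝ) = Real.sqrt 1 by simp]
      exact Real.sqrt_le_sqrt (by exact_mod_cast hn)
    have hlin : 0 ≤ (∑ i, C i * xs i) + (∑ i, cb i * ys i) := by
      have h1 := hZnn _ hmem2
      apply add_nonneg <;> apply Finset.sum_nonneg <;> intro i _
      · exact mul_nonneg (hC i) (h1 i).1
      · exact mul_nonneg (hcb i) (h1 i).2
    calc (∑ i, C i * xh i) + (∑ i, cb i * yh i)
          + Real.sqrt (∑ j, (∑ i, A i j * yh i) ^ 2)
        ≤ (∑ i, C i * xh i) + (∑ i, cb i * yh i) + (∑ j, |∑ i, A i j * yh i|) := by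
          gcongr; exact l2_le_l1 n _
      _ ≤ (∑ i, C i * xs i) + (∑ i, cb i * ys i) + (∑ j, |∑ i, A i j * ys i|) :=
          hopt1 _ hmem2
      _ ≤ (∑ i, C i * xs i) + (∑ i, cb i * ys i)
            + Real.sqrt n * Real.sqrt (∑ j, (∑ i, A i j * ys i) ^ 2) := by
          gcongr; exact l1_le_sqrt_l2 n _
      _ ≤ Real.sqrt n * ((∑ i, C i * xs i) + (∑ i, cb i * ys i))
            + Real.sqrt n * Real.sqrt (∑ j, (∑ i, A i j * ys i) ^ 2) := by
          gcongr; nlinarith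
      _ = Real.sqrt n * ((∑ i, C i * xs i) + (∑ i, cb i * ys i)
            + Real.sqrt (∑ j, (∑ i, A i j * ys i) ^ 2)) := by ring
end

section
/- Consider the MIP: minimize 10x₁ + x₂ + u subject to x₁ + y₁ + x₂ + y₂ = 2, x₁ + y₁ ≤ 1, x₂ + y₂ ≤ 1, u ≥ y₁, (1/2)u ≥ y₂, x₁, x₂ ∈ {0,1}, y₁, y₂ ∈ [0,1], u ≥ 0. Its optimal value is 2 (attained at y₁ = x₂ = 1, u = 1), while its LP relaxation (with x₁, x₂ ∈ [0,1]) has optimal value 3/2 (attained at y₁ = u = 1, x₂ = y₂ = 1/2). Hence the integrality gap is at least 4/3. -/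
/-- Core (LP) constraints of the 4/3-integrality-gap selection instance. -/
def FeasSel9 (x1 x2 y1 y2 u : ℝ) : Prop :=
  x1 + y1 + x2 + y2 = 2 ∧ x1 + y1 ≤ 1 ∧ x2 + y2 ≤ 1 ∧
  0 ≤ y1 ∧ y1 ≤ 1 ∧ 0 ≤ y2 ∧ y2 ≤ 1 ∧ 0 ≤ u ∧
  y1 ≤ u ∧ y2 ≤ (1 / 2) * u

/-- The MIP `min 10x₁ + x₂ + u` has optimal value `2`, its LP relaxation has
optimal value `3/2`, hence the integrality gap is at least `4/3`. -/
theorem stmt9 :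
    IsLeast
      {v : ℝ | ∃ x1 x2 y1 y2 u : ℝ, FeasSel9 x1 x2 y1 y2 u ∧
        (x1 = 0 ∨ x1 = 1) ∧ (x2 = 0 ∨ x2 = 1) ∧ v = 10 * x1 + x2 + u}
      2 ∧
    IsLeast
      {v : ℝ | ∃ x1 x2 y1 y2 u : ℝ, FeasSel9 x1 x2 y1 y2 u ∧
        0 ≤ x1 ∧ x1 ≤ 1 ∧ 0 ≤ x2 ∧ x2 ≤ 1 ∧ v = 10 * x1 + x2 + u}
      (3 / 2) ∧
    (4 / 3 : ℝ) ≤ 2 / (3 / 2) := by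
  refine ⟨⟨⟨0, 1, 1, 0, 1, ?_, ?_⟩, ?_⟩, ⟨⟨0, 1/2, 1, 1/2, 1, ?_, ?_⟩, ?_⟩, by norm_num⟩
  · unfold FeasSel9; norm_num
  · norm_num
  · rintro v ⟨x1, x2, y1, y2, u, ⟨h1, h2, h3, h4, h5, h6, h7, h8, h9, h10⟩,
      (rfl | rfl), (rfl | rfl), rfl⟩ <;> nlinarith
  · unfold FeasSel9; norm_num
  · norm_num
  · rintro v ⟨x1, x2, y1, y2, u, ⟨h1, h2, h3, h4, h5, h6, h7, h8, h9, h10⟩,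
      hx1, _, _, _, rfl⟩
    nlinarith
end

section
/- Let c̲ ∈ ℝⁿ₊ with coordinates sorted nondecreasingly, let d ∈ {0, ε, 2ε, …, 1}ⁿ where ε = 1/t for a positive integer t, let C ∈ ℝⁿ₊ and p an integer with 0 ≤ p ≤ n. Consider the problem: minimize Cᵀx + c̲ᵀy subject to ∑ᵢ(xᵢ + yᵢ) = p, x + y ≤ 1, 0 ≤ yᵢ ≤ dᵢ, x ∈ {0,1}ⁿ. If this problem is feasible, then it has an optimal solution in which yᵢ ∈ {0, ε, 2ε, …, 1} for every i. -/
/-- Feasibility for the discretized selection subproblem: `x` binary,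
`∑(xᵢ+yᵢ) = p`, `x + y ≤ 1`, `0 ≤ y ≤ d`. -/
def Feas10 (n : ℕ) (d : Fin n → ℝ) (p : ℕ) (x y : Fin n → ℝ) : Prop :=
  (∀ i, x i = 0 ∨ x i = 1) ∧
  (∑ i, (x i + y i)) = (p : ℝ) ∧
  (∀ i, x i + y i ≤ 1) ∧
  (∀ i, 0 ≤ y i ∧ y i ≤ d i)

lemma abel10 (c D : ℕ → ℝ) :
    ∀ m : ℕ, (∀ i j, i ≤ j → j ≤ m → c i ≤ c j) → (∀ i, i ≤ m → 0 ≤ D i) → D 0 = 0 →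
      ∑ i ∈ Finset.range m, c i * (D (i+1) - D i) ≤ c m * D m := by
  intro m
  induction m with
  | zero => intro _ _ h0; simp [h0]
  | succ m ih =>
    intro hc hD h0
    rw [Finset.sum_range_succ]
    have h1 := ih (fun i j hij hj => hc i j hij (by omega)) (fun i hi => hD i (by omega)) h0
    have h2 : c m ≤ c (m+1) := hc m (m+1) (by omega) le_rfl
    have h3 : 0 ≤ D (m+1) := hD _ le_rfl
    nlinarith [mul_le_mul_of_nonneg_right h2 h3]

/-- Greedy rounding: any feasible `(x', y')` can be rounded to a grid `y`
with the same `x'`, still feasible, and no larger `cb`-cost. -/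
lemma round10 (n t : ℕ) (ht : 1 ≤ t) (ε : ℝ) (hε : ε = 1 / (t : ℝ))
    (cb d : Fin n → ℝ)
    (hsort : ∀ i j : Fin n, i ≤ j → cb i ≤ cb j)
    (hd : ∀ i, ∃ k : ℕ, k ≤ t ∧ d i = (k : ℝ) * ε)
    (p : ℕ) (x' y' : Fin n → ℝ) (hf : Feas10 n d p x' y') :
    ∃ y, Feas10 n d p x' y ∧ (∀ i, ∃ k : ℕ, k ≤ t ∧ y i = (k : ℝ) * ε) ∧
      ∑ i, cb i * y i ≤ ∑ i, cb i * y' i := by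
  rcases Nat.eq_zero_or_pos n with hn | hn
  · subst hn
    exact ⟨y', hf, fun i => absurd i.isLt (by omega), le_rfl⟩
  obtain ⟨hx, hsum, hle1, hybd⟩ := hf
  have htR : (0:ℝ) < t := by exact_mod_cast Nat.lt_of_lt_of_le Nat.zero_lt_one ht
  have hεpos : 0 < ε := by rw [hε]; positivity
  have hεt : (t:ℝ) * ε = 1 := by rw [hε]; field_simp
  choose kd hkdle hkdeq using hd
  -- x' sums to a natural number M
  have hxsplit : ∑ i, x' i + ∑ i, y' i = (p:ℝ) := by
    rw [← Finset.sum_add_distrib]; exact hsum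
  set M : ℕ := (Finset.univ.filter (fun i => x' i = 1)).card with hMdef
  have hsumx : ∑ i, x' i = (M : ℝ) := by
    rw [← Finset.sum_filter_add_sum_filter_not Finset.univ (fun i => x' i = 1) x']
    have h1 : ∑ i ∈ Finset.univ.filter (fun i => x' i = 1), x' i = (M:ℝ) := by
      rw [Finset.sum_congr rfl (fun i hi => (Finset.mem_filter.mp hi).2), Finset.sum_const]
      simp [hMdef]
    have h2 : ∑ i ∈ Finset.univ.filter (fun i => ¬ x' i = 1), x' i = 0 := by
      apply Finset.sum_eq_zero; intro i hi
      rcases hx i with h | h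
      · exact h
      · exact absurd h (Finset.mem_filter.mp hi).2
    rw [h1, h2, add_zero]
  have hy'nn : ∀ i, 0 ≤ y' i := fun i => (hybd i).1
  have hMp : M ≤ p := by
    have : (0:ℝ) ≤ ∑ i, y' i := Finset.sum_nonneg (fun i _ => hy'nn i)
    have : (M:ℝ) ≤ p := by linarith [hxsplit, hsumx]
    exact_mod_cast this
  set N : ℕ := p - M with hNdef
  set SK : ℕ := N * t with hSKdef
  have hSKε : (SK:ℝ) * ε = (p:ℝ) - M := by
    have : (N:ℝ) = (p:ℝ) - M := by
      rw [hNdef]; push_cast [Nat.cast_sub hMp]; ring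
    rw [hSKdef]; push_cast; rw [mul_assoc, hεt, mul_one, this]
  have hSy' : ∑ i, y' i = (SK:ℝ) * ε := by
    rw [hSKε]; linarith [hxsplit, hsumx]
  -- natural-number capacities
  set uK : ℕ → ℕ := fun i => if h : i < n then (if x' ⟨i,h⟩ = 1 then 0 else kd ⟨i,h⟩) else 0
    with huKdef
  set y'N : ℕ → ℝ := fun i => if h : i < n then y' ⟨i,h⟩ else 0 with hy'Ndef
  have hy'Nnn : ∀ i, 0 ≤ y'N i := by
    intro i; rw [hy'Ndef]; dsimp only; split
    · exact hy'nn _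
    · exact le_rfl
  have hy'Nle : ∀ i, y'N i ≤ (uK i : ℝ) * ε := by
    intro i; rw [hy'Ndef, huKdef]; dsimp only; split
    · rename_i h
      rcases hx ⟨i,h⟩ with hx0 | hx1
      · rw [if_neg (by rw [hx0]; norm_num)]
        rw [← hkdeq ⟨i,h⟩]; exact (hybd ⟨i,h⟩).2
      · rw [if_pos hx1]
        have := hle1 ⟨i,h⟩; push_cast; rw [hx1] at this; linarith
    · simp
  set UK : ℕ → ℕ := fun m => ∑ i ∈ Finset.range m, uK i with hUKdef
  have hUKmono : Monotone UK := by
    intro a b hab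
    exact Finset.sum_le_sum_of_subset (Finset.range_subset_range.mpr hab)
  have hUKsucc : ∀ m, UK (m+1) = UK m + uK m := by
    intro m; rw [hUKdef]; exact Finset.sum_range_succ _ _
  -- partial sums of y'
  set P : ℕ → ℝ := fun m => ∑ i ∈ Finset.range m, y'N i with hPdef
  have hPn : P n = (SK:ℝ) * ε := by
    rw [hPdef, ← hSy']
    dsimp only
    rw [← Fin.sum_univ_eq_sum_range y'N n]
    apply Finset.sum_congr rfl
    intro i _
    rw [hy'Ndef]; dsimp only; rw [dif_pos i.isLt]
  have hPleU : ∀ m, P m ≤ (UK m : ℝ) * ε := by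
    intro m
    rw [hPdef, hUKdef]; dsimp only
    push_cast
    rw [Finset.sum_mul]
    exact Finset.sum_le_sum (fun i _ => hy'Nle i)
  have hPleS : ∀ m, m ≤ n → P m ≤ (SK:ℝ) * ε := by
    intro m hm
    rw [← hPn, hPdef]
    exact Finset.sum_le_sum_of_subset_of_nonneg (Finset.range_subset_range.mpr hm)
      (fun i _ _ => hy'Nnn i)
  have hSKleUKn : SK ≤ UK n := by
    have h1 : (SK:ℝ) * ε ≤ (UK n : ℝ) * ε := by
      rw [← hPn]; exact hPleU n
    have := le_of_mul_le_mul_right h1 hεpos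
    exact_mod_cast this
  -- greedy partial sums
  set gK : ℕ → ℕ := fun m => min SK (UK m) with hgKdef
  have hgKmono : Monotone gK := fun a b hab => le_min (min_le_left _ _)
    (le_trans (min_le_right _ _) (hUKmono hab))
  have hgK0 : gK 0 = 0 := by

    rw [hgKdef, hUKdef]; simp
  have hgKn : gK n = SK := by
    rw [hgKdef]; exact min_eq_left hSKleUKn
  set kdiff : ℕ → ℕ := fun i => gK (i+1) - gK i with hkdiffdef
  have hkdiff_le : ∀ i, kdiff i ≤ uK i := by
    intro i
    rw [hkdiffdef]; dsimp only
    have h := hUKsucc i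
    rw [hgKdef]; dsimp only; omega
  have hgsub : ∀ i, (kdiff i : ℝ) = (gK (i+1):ℝ) - (gK i : ℝ) := by
    intro i; rw [hkdiffdef]
    push_cast [Nat.cast_sub (hgKmono (Nat.le_succ i))]; ring
  have huKkd : ∀ (i : Fin n), uK i.val ≤ kd i := by
    intro i
    rw [huKdef]; dsimp only; rw [dif_pos i.isLt]
    split <;> simp [Fin.eta]
  -- the rounded y
  refine ⟨fun i => (kdiff i.val : ℝ) * ε, ⟨hx, ?_, ?_, ?_⟩, ?_, ?_⟩
  · -- sum constraint
    have hsy : ∑ i : Fin n, (kdiff i.val : ℝ) * ε = (SK:ℝ) * ε := by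
      rw [Fin.sum_univ_eq_sum_range (fun j => (kdiff j : ℝ) * ε) n]
      have : ∀ j, (kdiff j : ℝ) * ε = (gK (j+1):ℝ)*ε - (gK j:ℝ)*ε := by
        intro j; rw [hgsub]; ring
      rw [Finset.sum_congr rfl (fun j _ => this j), Finset.sum_range_sub (fun m => (gK m:ℝ)*ε)]
      rw [hgKn, hgK0]; push_cast; ring
    rw [Finset.sum_add_distrib, hsy, hsumx, hSKε]; ring
  · -- x + y ≤ 1
    intro i
    rcases hx i with hx0 | hx1
    · rw [hx0, zero_add]
      calc (kdiff i.val : ℝ) * ε ≤ (t:ℝ) * ε := by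
            apply mul_le_mul_of_nonneg_right _ hεpos.le
            exact_mod_cast le_trans (hkdiff_le i.val) (le_trans (huKkd i) (hkdle i))
        _ = 1 := hεt
    · rw [hx1]
      have huK0 : uK i.val = 0 := by
        rw [huKdef]; dsimp only; rw [dif_pos i.isLt, if_pos (by rw [Fin.eta]; exact hx1)]
      have : kdiff i.val = 0 := by have := hkdiff_le i.val; omega
      simp only [this, Nat.cast_zero, zero_mul, add_zero]
      norm_num
  · -- 0 ≤ y ≤ d
    intro i
    constructor
    · positivity
    · rw [hkdeq i]
      apply mul_le_mul_of_nonneg_right _ hεpos.le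
      exact_mod_cast le_trans (hkdiff_le i.val) (huKkd i)
  · -- grid
    intro i
    exact ⟨kdiff i.val, le_trans (hkdiff_le i.val) (le_trans (huKkd i) (hkdle i)), rfl⟩
  · -- optimality
    set cN : ℕ → ℝ := fun i => cb ⟨min i (n-1), by omega⟩ with hcNdef
    have hcNmono : ∀ i j, i ≤ j → cN i ≤ cN j := by
      intro i j hij
      rw [hcNdef]
      exact hsort _ _ (by simp [Fin.mk_le_mk]; omega)
    have hcNi : ∀ (i : Fin n), cN i.val = cb i := by
      intro i
      rw [hcNdef]; dsimp only
      congr 1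
      exact Fin.ext (by simp; omega)
    set D : ℕ → ℝ := fun m => (gK m : ℝ) * ε - P m with hDdef
    have hD0 : D 0 = 0 := by rw [hDdef]; dsimp only; rw [hgK0, hPdef]; simp
    have hDn : D n = 0 := by rw [hDdef]; dsimp only; rw [hgKn, hPn]; ring
    have hDnn : ∀ m, m ≤ n → 0 ≤ D m := by
      intro m hm
      rw [hDdef]; dsimp only
      have h1 := hPleS m hm
      have h2 := hPleU m
      rw [hgKdef]; dsimp only
      rcases le_total SK (UK m) with h | h
      · rw [min_eq_left h]; linarith
      · rw [min_eq_right h]; linarith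
    have habel := abel10 cN D n (fun i j hij _ => hcNmono i j hij) hDnn hD0
    rw [hDn, mul_zero] at habel
    have hsplit : ∑ i ∈ Finset.range n, cN i * (D (i+1) - D i)
        = ∑ i, cb i * ((kdiff i.val : ℝ) * ε) - ∑ i, cb i * y' i := by
      have hterm : ∀ j, j < n → cN j * (D (j+1) - D j)
          = cN j * ((kdiff j : ℝ) * ε) - cN j * y'N j := by
        intro j hj
        have : D (j+1) - D j = (kdiff j : ℝ) * ε - y'N j := by
          rw [hDdef]; dsimp only
          rw [hgsub, hPdef]; dsimp only
          rw [Finset.sum_range_succ]; ring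
        rw [this]; ring
      rw [Finset.sum_congr rfl (fun j hj => hterm j (Finset.mem_range.mp hj)),
        Finset.sum_sub_distrib]
      congr 1
      · rw [← Fin.sum_univ_eq_sum_range (fun j => cN j * ((kdiff j : ℝ) * ε)) n]
        exact Finset.sum_congr rfl (fun i _ => by rw [hcNi i])
      · rw [← Fin.sum_univ_eq_sum_range (fun j => cN j * y'N j) n]
        apply Finset.sum_congr rfl
        intro i _
        rw [hcNi i, hy'Ndef]; dsimp only; rw [dif_pos i.isLt]
    rw [hsplit] at habel
    linarith

/-- Discretization property: if the problem is feasible, it has an optimal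
solution in which every `yᵢ` is a multiple of `ε` in `{0, ε, 2ε, …, 1}`. -/
theorem stmt10 (n t : ℕ) (ht : 1 ≤ t) (ε : ℝ) (hε : ε = 1 / (t : ℝ))
    (C cb d : Fin n → ℝ)
    (hC : ∀ i, 0 ≤ C i) (hcb : ∀ i, 0 ≤ cb i)
    (hsort : ∀ i j : Fin n, i ≤ j → cb i ≤ cb j)
    (hd : ∀ i, ∃ k : ℕ, k ≤ t ∧ d i = (k : ℝ) * ε)
    (p : ℕ) (hp : p ≤ n)
    (hfeas : ∃ x y : Fin n → ℝ, Feas10 n d p x y) :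
    ∃ x y : Fin n → ℝ, Feas10 n d p x y ∧
      (∀ x' y' : Fin n → ℝ, Feas10 n d p x' y' →
        (∑ i, (C i * x i + cb i * y i)) ≤ ∑ i, (C i * x' i + cb i * y' i)) ∧
      ∀ i, ∃ k : ℕ, k ≤ t ∧ y i = (k : ℝ) * ε := by
  set S : Set ((Fin n → ℝ) × (Fin n → ℝ)) :=
    {q | Feas10 n d p q.1 q.2 ∧ ∀ i, ∃ k : ℕ, k ≤ t ∧ q.2 i = (k : ℝ) * ε} with hSdef
  have hfin : S.Finite := by
    apply Set.Finite.subset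
      (Set.Finite.prod
        (Set.Finite.pi (fun _ : Fin n => (Set.finite_singleton (0:ℝ)).insert 1 |>.subset
          (by intro a ha; exact ha)))
        (Set.Finite.pi (fun _ : Fin n => ((Set.finite_Iic t).image (fun k : ℕ => (k:ℝ)*ε)))))
    rintro ⟨x, y⟩ ⟨⟨hx, _, _, _⟩, hy⟩
    constructor
    · intro i _
      rcases hx i with h | h
      · exact Set.mem_insert_iff.mpr (Or.inr h)
      · exact Set.mem_insert_iff.mpr (Or.inl h)
    · intro i _
      obtain ⟨k, hk, hky⟩ := hy i
      exact ⟨k, hk, hky.symm⟩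
  have hne : S.Nonempty := by
    obtain ⟨x0, y0, hf0⟩ := hfeas
    obtain ⟨y1, hf1, hgrid1, _⟩ := round10 n t ht ε hε cb d hsort hd p x0 y0 hf0
    exact ⟨(x0, y1), hf1, hgrid1⟩
  obtain ⟨⟨x, y⟩, hmem, hmin⟩ :=
    Set.exists_min_image S (fun q => ∑ i, (C i * q.1 i + cb i * q.2 i)) hfin hne
  refine ⟨x, y, hmem.1, ?_, hmem.2⟩
  intro x' y' hf'
  obtain ⟨y'', hf'', hgrid'', hcost''⟩ := round10 n t ht ε hε cb d hsort hd p x' y' hf'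
  have h1 := hmin (x', y'') ⟨hf'', hgrid''⟩
  simp only at h1
  calc ∑ i, (C i * x i + cb i * y i) ≤ ∑ i, (C i * x' i + cb i * y'' i) := h1
    _ ≤ ∑ i, (C i * x' i + cb i * y' i) := by
        rw [Finset.sum_add_distrib, Finset.sum_add_distrib]
        exact add_le_add le_rfl hcost''
end

section
/- Let H ∈ ℝᵐˣⁿ, g ∈ ℝᵐ, and suppose the polyhedron N = {x ∈ ℝⁿ : Hx ≥ g, 0 ≤ x ≤ 1} is integral. Let U ⊂ ℝⁿ₊ be a nonempty compact convex set and x ∈ {0,1}ⁿ with R(x) = {y ∈ {0,1}ⁿ : x + y ∈ N} nonempty. Then max_{c∈U} min_{y∈R(x)} cᵀy = min_{y ∈ P(x)} max_{c∈U} cᵀy, where P(x) = {y ∈ ℝⁿ : H(x+y) ≥ g, 0 ≤ y ≤ 1 − x}. -/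
/-- The polyhedron `N = {x : Hx ≥ g, 0 ≤ x ≤ 1}`. -/
def NSet (n m : ℕ) (H : Fin m → Fin n → ℝ) (g : Fin m → ℝ) : Set (Fin n → ℝ) :=
  {x | (∀ i, g i ≤ ∑ j, H i j * x j) ∧ ∀ j, 0 ≤ x j ∧ x j ≤ 1}

/-- The binary recourse set `R(x)`. -/
def Rset (n m : ℕ) (H : Fin m → Fin n → ℝ) (g : Fin m → ℝ) (x : Fin n → ℝ) :
    Set (Fin n → ℝ) :=
  {y | (∀ j, y j = 0 ∨ y j = 1) ∧ (fun j => x j + y j) ∈ NSet n m H g}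

/-- The relaxed recourse polytope `P(x)`. -/
def Pset (n m : ℕ) (H : Fin m → Fin n → ℝ) (g : Fin m → ℝ) (x : Fin n → ℝ) :
    Set (Fin n → ℝ) :=
  {y | (∀ i, g i ≤ ∑ j, H i j * (x j + y j)) ∧ ∀ j, 0 ≤ y j ∧ y j ≤ 1 - x j}

/-- Values of `c` over the binary recourse set. -/
def Wset (n m : ℕ) (H : Fin m → Fin n → ℝ) (g : Fin m → ℝ) (x c : Fin n → ℝ) : Set ℝ :=
  {w | ∃ y : Fin n → ℝ,
    ((∀ j, y j = 0 ∨ y j = 1) ∧ (fun j => x j + y j) ∈ NSet n m H g) ∧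
    w = ∑ j, c j * y j}

/-- Values of `U` at a fixed recourse `y`. -/
def Qset (n : ℕ) (U : Set (Fin n → ℝ)) (y : Fin n → ℝ) : Set ℝ :=
  {w | ∃ c ∈ U, w = ∑ j, c j * y j}

lemma Rset_subset_Pset (n m : ℕ) (H : Fin m → Fin n → ℝ) (g : Fin m → ℝ) (x : Fin n → ℝ) :
    Rset n m H g x ⊆ Pset n m H g x := by
  rintro y ⟨hybin, hyN⟩
  refine ⟨hyN.1, fun j => ?_⟩
  have h1 : 0 ≤ y j := by rcases hybin j with h | h <;> rw [h] <;> norm_num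
  have h2 : x j + y j ≤ 1 := (hyN.2 j).2
  exact ⟨h1, by linarith⟩

lemma Rset_finite (n m : ℕ) (H : Fin m → Fin n → ℝ) (g : Fin m → ℝ) (x : Fin n → ℝ) :
    (Rset n m H g x).Finite := by
  apply Set.Finite.subset
    (Set.Finite.pi (fun _ : Fin n => (Set.finite_singleton (1:ℝ)).insert 0))
  rintro y ⟨hybin, -⟩
  rw [Set.mem_pi]
  intro j _
  rcases hybin j with h | h <;> simp [h]

lemma Pset_isCompact (n m : ℕ) (H : Fin m → Fin n → ℝ) (g : Fin m → ℝ) (x : Fin n → ℝ)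
    (hx0 : ∀ j, 0 ≤ x j) : IsCompact (Pset n m H g x) := by
  apply IsCompact.of_isClosed_subset (isCompact_Icc (a := (0 : Fin n → ℝ)) (b := 1))
  · have : Pset n m H g x =
        (⋂ i, {y : Fin n → ℝ | g i ≤ ∑ j, H i j * (x j + y j)}) ∩
        ⋂ j, ({y : Fin n → ℝ | 0 ≤ y j} ∩ {y : Fin n → ℝ | y j ≤ 1 - x j}) := by
      ext y
      simp only [Pset, Set.mem_setOf_eq, Set.mem_inter_iff, Set.mem_iInter, forall_and]
    rw [this]
    apply IsClosed.inter
    · exact isClosed_iInter fun i => isClosed_le continuous_const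
        (continuous_finset_sum _ fun j _ =>
          continuous_const.mul (continuous_const.add (continuous_apply j)))
    · exact isClosed_iInter fun j => (isClosed_le continuous_const
        (continuous_apply j)).inter (isClosed_le (continuous_apply j) continuous_const)
  · rintro y ⟨-, hy⟩
    rw [Set.mem_Icc]
    constructor
    · intro j; exact (hy j).1
    · intro j
      have h1 := (hy j).2
      have h2 := hx0 j
      show y j ≤ (1 : Fin n → ℝ) j
      simp only [Pi.one_apply]
      linarith

lemma Pset_convex (n m : ℕ) (H : Fin m → Fin n → ℝ) (g : Fin m → ℝ) (x : Fin n → ℝ) :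
    Convex ℝ (Pset n m H g x) := by
  rintro y1 ⟨hg1, hb1⟩ y2 ⟨hg2, hb2⟩ a b ha hb hab
  constructor
  · intro i
    have hsum : (∑ j, H i j * (x j + (a • y1 + b • y2) j)) =
        a * (∑ j, H i j * (x j + y1 j)) + b * ∑ j, H i j * (x j + y2 j) := by
      rw [Finset.mul_sum, Finset.mul_sum, ← Finset.sum_add_distrib]
      refine Finset.sum_congr rfl fun j _ => ?_
      simp only [Pi.add_apply, Pi.smul_apply, smul_eq_mul]
      linear_combination (-(H i j * x j)) * hab
    rw [hsum]
    have h1 := mul_le_mul_of_nonneg_left (hg1 i) ha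
    have h2 := mul_le_mul_of_nonneg_left (hg2 i) hb
    have h3 : a * g i + b * g i = g i := by linear_combination g i * hab
    linarith
  · intro j
    simp only [Pi.add_apply, Pi.smul_apply, smul_eq_mul]
    constructor
    · exact add_nonneg (mul_nonneg ha (hb1 j).1) (mul_nonneg hb (hb2 j).1)
    · have h1 := mul_le_mul_of_nonneg_left (hb1 j).2 ha
      have h2 := mul_le_mul_of_nonneg_left (hb2 j).2 hb
      have h3 : a * (1 - x j) + b * (1 - x j) = 1 - x j := by
        linear_combination (1 - x j) * hab
      linarith

lemma clm_pi_repr {ι : Type*} [Fintype ι] [DecidableEq ι]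
    (f : (ι → ℝ) →L[ℝ] ℝ) (z : ι → ℝ) :
    f z = ∑ c, z c * f (Pi.single c 1) := by
  have hz : z = ∑ c, z c • (Pi.single c (1:ℝ) : ι → ℝ) := by
    funext j
    simp [Finset.sum_apply, Pi.single_apply]
  conv_lhs => rw [hz]
  rw [map_sum]
  simp only [map_smul, smul_eq_mul]

/-- **Integrality lemma**: the LP `min c·y` over `P(x)` is attained at a binary
recourse point. -/
lemma exists_binary_min (n m : ℕ) (H : Fin m → Fin n → ℝ) (g : Fin m → ℝ)
    (hInt : ∀ c : Fin n → ℝ, ∃ z ∈ NSet n m H g,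
      (∀ j, z j = 0 ∨ z j = 1) ∧ ∀ x ∈ NSet n m H g, (∑ j, c j * z j) ≤ ∑ j, c j * x j)
    (x : Fin n → ℝ) (hx : ∀ j, x j = 0 ∨ x j = 1)
    (hR : ∃ y : Fin n → ℝ, (∀ j, y j = 0 ∨ y j = 1) ∧
      (fun j => x j + y j) ∈ NSet n m H g) (c : Fin n → ℝ) :
    ∃ y ∈ Rset n m H g x, ∀ y' ∈ Pset n m H g x,
      (∑ j, c j * y j) ≤ ∑ j, c j * y' j := by
  classical
  set B : ℝ := ∑ j, |c j| with hB
  have hB0 : 0 ≤ B := Finset.sum_nonneg fun j _ => abs_nonneg _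
  set M : ℝ := B + 1 with hM
  set c' : Fin n → ℝ := fun j => if x j = 1 then -M else c j with hc'
  obtain ⟨z, hzN, hzbin, hzmin⟩ := hInt c'
  obtain ⟨y0, hy0bin, hy0N⟩ := hR
  set z0 : Fin n → ℝ := fun j => x j + y0 j with hz0
  have hz0N : z0 ∈ NSet n m H g := hy0N
  have hz0one : ∀ j, x j = 1 → z0 j = 1 := by
    intro j hj
    have h2 : x j + y0 j ≤ 1 := (hy0N.2 j).2
    have hyj : y0 j = 0 := by
      rcases hy0bin j with h | h
      · exact h
      · exfalso; rw [h, hj] at h2; linarith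
    show x j + y0 j = 1
    rw [hyj, hj]; ring
  -- every coordinate with x j = 1 is forced to 1 in the optimal z
  have hz1 : ∀ j, x j = 1 → z j = 1 := by
    by_contra hcon
    push_neg at hcon
    obtain ⟨j0, hxj0, hzj0⟩ := hcon
    have hzj0' : z j0 = 0 := by
      rcases hzbin j0 with h | h
      · exact h
      · exact absurd h hzj0
    have hmin := hzmin z0 hz0N
    have hsum : (0:ℝ) ≤ ∑ j, c' j * (z0 j - z j) := by
      have : ∑ j, c' j * (z0 j - z j) = (∑ j, c' j * z0 j) - ∑ j, c' j * z j := by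
        rw [← Finset.sum_sub_distrib]
        exact Finset.sum_congr rfl fun j _ => by ring
      rw [this]; linarith
    have hbound : ∑ j, c' j * (z0 j - z j) ≤ B - M := by
      rw [← Finset.sum_erase_add _ _ (Finset.mem_univ j0)]
      have hterm : c' j0 * (z0 j0 - z j0) = -M := by
        rw [hzj0', hz0one j0 hxj0]
        simp [hc', hxj0]
      rw [hterm]
      have herase : (∑ j ∈ Finset.univ.erase j0, c' j * (z0 j - z j)) ≤
          ∑ j ∈ Finset.univ.erase j0, |c j| := by
        apply Finset.sum_le_sum
        intro j _
        rcases hx j with hxj | hxj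
        · have : c' j = c j := by simp [hc', hxj]
          rw [this]
          have hz0b : 0 ≤ z0 j ∧ z0 j ≤ 1 := hz0N.2 j
          have hzb : 0 ≤ z j ∧ z j ≤ 1 := hzN.2 j
          calc c j * (z0 j - z j) ≤ |c j * (z0 j - z j)| := le_abs_self _
            _ = |c j| * |z0 j - z j| := abs_mul _ _
            _ ≤ |c j| * 1 := by
                apply mul_le_mul_of_nonneg_left _ (abs_nonneg _)
                rw [abs_le]; constructor <;> linarith [hz0b.1, hz0b.2, hzb.1, hzb.2]
            _ = |c j| := mul_one _
        · have hcj : c' j = -M := by simp [hc', hxj]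
          have hz0j : z0 j = 1 := hz0one j hxj
          have hzb : 0 ≤ z j ∧ z j ≤ 1 := hzN.2 j
          rw [hcj, hz0j]
          have h1z : 0 ≤ 1 - z j := by linarith [hzb.2]
          have hM0 : 0 < M := by rw [hM]; linarith
          have : 0 ≤ M * (1 - z j) := mul_nonneg hM0.le h1z
          have habs := abs_nonneg (c j)
          nlinarith
      have hsub : (∑ j ∈ Finset.univ.erase j0, |c j|) ≤ B := by
        rw [hB]
        exact Finset.sum_le_sum_of_subset_of_nonneg (Finset.erase_subset _ _)
          (fun j _ _ => abs_nonneg _)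
      linarith
    rw [hM] at hbound
    linarith
  -- the binary recourse point
  refine ⟨fun j => z j - x j, ⟨fun j => ?_, ?_⟩, ?_⟩
  · show z j - x j = 0 ∨ z j - x j = 1
    rcases hx j with hxj | hxj
    · rw [hxj]; simpa using hzbin j
    · rw [hz1 j hxj, hxj]; left; ring
  · have : (fun j => x j + (z j - x j)) = z := by funext j; ring
    rw [this]; exact hzN
  · rintro y' ⟨hy'1, hy'2⟩
    set z' : Fin n → ℝ := fun j => x j + y' j with hz'
    have hx0 : ∀ j, 0 ≤ x j := by
      intro j; rcases hx j with h | h <;> rw [h] <;> norm_num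
    have hz'N : z' ∈ NSet n m H g := by
      refine ⟨hy'1, fun j => ?_⟩
      have h1 := (hy'2 j).1
      have h2 := (hy'2 j).2
      constructor
      · simp only [hz']; linarith [hx0 j]
      · simp only [hz']; linarith
    have hmin := hzmin z' hz'N
    have heq : ∑ j, (c' j - c j) * z j = ∑ j, (c' j - c j) * z' j := by
      apply Finset.sum_congr rfl
      intro j _
      rcases hx j with hxj | hxj
      · have : c' j = c j := by simp [hc', hxj]
        rw [this]; ring
      · have hzj : z j = 1 := hz1 j hxj
        have hy'j : y' j = 0 := by
          have h1 := (hy'2 j).1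
          have h2 := (hy'2 j).2
          rw [hxj] at h2; linarith
        have hz'j : z' j = 1 := by simp only [hz', hy'j, hxj]; ring
        rw [hzj, hz'j]
    have e1 : ∀ w : Fin n → ℝ, (∑ j, c j * w j) =
        (∑ j, c' j * w j) - ∑ j, (c' j - c j) * w j := by
      intro w
      rw [← Finset.sum_sub_distrib]
      exact Finset.sum_congr rfl fun j _ => by ring
    have hzz' : (∑ j, c j * z j) ≤ ∑ j, c j * z' j := by
      rw [e1 z, e1 z']; linarith
    have e2 : (∑ j, c j * (z j - x j)) = (∑ j, c j * z j) - ∑ j, c j * x j := by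
      rw [← Finset.sum_sub_distrib]
      exact Finset.sum_congr rfl fun j _ => by ring
    have e3 : (∑ j, c j * z' j) = (∑ j, c j * x j) + ∑ j, c j * y' j := by
      rw [← Finset.sum_add_distrib]
      exact Finset.sum_congr rfl fun j _ => by simp only [hz']; ring
    rw [e2]; linarith

/-- If `N` is integral, `U` is a nonempty compact convex set of nonnegative
cost vectors, and `x` is binary with nonempty binary recourse set
`R(x) = {y ∈ {0,1}ⁿ : x + y ∈ N}`, then
`max_{c∈U} min_{y∈R(x)} cᵀy = min_{y∈P(x)} max_{c∈U} cᵀy`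
where `P(x) = {y : H(x+y) ≥ g, 0 ≤ y ≤ 1 − x}`. -/
theorem stmt11 (n m : ℕ) (H : Fin m → Fin n → ℝ) (g : Fin m → ℝ)
    (hInt : ∀ c : Fin n → ℝ, ∃ z ∈ NSet n m H g,
      (∀ j, z j = 0 ∨ z j = 1) ∧ ∀ x ∈ NSet n m H g, (∑ j, c j * z j) ≤ ∑ j, c j * x j)
    (U : Set (Fin n → ℝ)) (hUne : U.Nonempty) (hUc : IsCompact U)
    (hUconv : Convex ℝ U) (hUnn : ∀ c ∈ U, ∀ i, 0 ≤ c i)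
    (x : Fin n → ℝ) (hx : ∀ j, x j = 0 ∨ x j = 1)
    (hR : ∃ y : Fin n → ℝ, (∀ j, y j = 0 ∨ y j = 1) ∧
      (fun j => x j + y j) ∈ NSet n m H g) :
    sSup {v : ℝ | ∃ c ∈ U,
        v = sInf {w : ℝ | ∃ y : Fin n → ℝ,
          ((∀ j, y j = 0 ∨ y j = 1) ∧ (fun j => x j + y j) ∈ NSet n m H g) ∧
          w = ∑ j, c j * y j}} =
      sInf {v : ℝ | ∃ y : Fin n → ℝ,
        ((∀ i, g i ≤ ∑ j, H i j * (x j + y j)) ∧ ∀ j, 0 ≤ y j ∧ y j ≤ 1 - x j) ∧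
        v = sSup {w : ℝ | ∃ c ∈ U, w = ∑ j, c j * y j}} := by
  classical
  show sSup {v : ℝ | ∃ c ∈ U, v = sInf (Wset n m H g x c)} =
    sInf {v : ℝ | ∃ y : Fin n → ℝ, y ∈ Pset n m H g x ∧ v = sSup (Qset n U y)}
  obtain ⟨c0, hc0U⟩ := id hUne
  obtain ⟨y0, hy0⟩ := hR
  have hy0R : y0 ∈ Rset n m H g x := hy0
  have hx0 : ∀ j, 0 ≤ x j := by
    intro j; rcases hx j with h | h <;> rw [h] <;> norm_num
  have hRP := Rset_subset_Pset n m H g x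
  have hRfin := Rset_finite n m H g x
  have hPco := Pset_isCompact n m H g x hx0
  have hPcv := Pset_convex n m H g x
  -- facts about the inner min sets
  have hWne : ∀ c : Fin n → ℝ, (Wset n m H g x c).Nonempty :=
    fun c => ⟨_, y0, hy0R, rfl⟩
  have hWfin : ∀ c : Fin n → ℝ, (Wset n m H g x c).Finite := by
    intro c
    apply (hRfin.image (fun y => ∑ j, c j * y j)).subset
    rintro w ⟨y, hy, rfl⟩
    exact ⟨y, hy, rfl⟩
  have hWmem : ∀ c : Fin n → ℝ, sInf (Wset n m H g x c) ∈ Wset n m H g x c :=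
    fun c => (hWne c).csInf_mem (hWfin c)
  have hWle : ∀ (c : Fin n → ℝ) (y : Fin n → ℝ), y ∈ Rset n m H g x →
      sInf (Wset n m H g x c) ≤ ∑ j, c j * y j :=
    fun c y hy => csInf_le (hWfin c).bddBelow ⟨y, hy, rfl⟩
  have hWleP : ∀ c : Fin n → ℝ, ∀ y' ∈ Pset n m H g x,
      sInf (Wset n m H g x c) ≤ ∑ j, c j * y' j := by
    intro c y' hy'
    obtain ⟨yb, hybR, hybmin⟩ := exists_binary_min n m H g hInt x hx ⟨y0, hy0⟩ c
    exact le_trans (hWle c yb hybR) (hybmin y' hy')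
  -- facts about the inner max sets
  have hQbdd : ∀ y : Fin n → ℝ, BddAbove (Qset n U y) := by
    intro y
    obtain ⟨cm, hcm, hmax⟩ := hUc.exists_isMaxOn hUne
      (continuous_finset_sum _ fun j _ =>
        (continuous_apply j).mul continuous_const).continuousOn
    refine ⟨∑ j, cm j * y j, ?_⟩
    rintro w ⟨c, hc, rfl⟩
    exact hmax hc
  have hQne : ∀ y : Fin n → ℝ, (Qset n U y).Nonempty := fun y => ⟨_, c0, hc0U, rfl⟩
  have hQnn : ∀ y ∈ Pset n m H g x, (0:ℝ) ≤ sSup (Qset n U y) := by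
    intro y hy
    have h0 : (0:ℝ) ≤ ∑ j, c0 j * y j :=
      Finset.sum_nonneg fun j _ => mul_nonneg (hUnn c0 hc0U j) (hy.2 j).1
    exact le_trans h0 (le_csSup (hQbdd y) ⟨c0, hc0U, rfl⟩)
  -- the outer sets
  set A : Set ℝ := {v : ℝ | ∃ c ∈ U, v = sInf (Wset n m H g x c)} with hA
  set Bs : Set ℝ := {v : ℝ | ∃ y : Fin n → ℝ, y ∈ Pset n m H g x ∧ v = sSup (Qset n U y)}
    with hBs
  have hAne : A.Nonempty := ⟨_, c0, hc0U, rfl⟩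
  have hAbdd : BddAbove A := by
    obtain ⟨cm, hcmU, hcmax⟩ := hUc.exists_isMaxOn hUne
      (continuous_finset_sum Finset.univ fun j _ => continuous_apply j).continuousOn
    refine ⟨∑ j, cm j, ?_⟩
    rintro v ⟨c, hc, rfl⟩
    have h1 : sInf (Wset n m H g x c) ≤ ∑ j, c j * y0 j := hWle c y0 hy0R
    have h2 : (∑ j, c j * y0 j) ≤ ∑ j, c j := by
      apply Finset.sum_le_sum
      intro j _
      have hcj := hUnn c hc j
      have hyj : y0 j ≤ 1 := by rcases hy0.1 j with h | h <;> rw [h] <;> norm_num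
      nlinarith
    exact le_trans h1 (le_trans h2 (hcmax hc))
  have hBne : Bs.Nonempty := ⟨_, y0, hRP hy0R, rfl⟩
  have hBbdd : BddBelow Bs := by
    refine ⟨0, ?_⟩
    rintro v ⟨y, hyP, rfl⟩
    exact hQnn y hyP
  -- easy direction
  have hle1 : sSup A ≤ sInf Bs := by
    apply csSup_le hAne
    rintro v ⟨c, hc, rfl⟩
    apply le_csInf hBne
    rintro w ⟨y, hyP, rfl⟩
    exact le_trans (hWleP c y hyP) (le_csSup (hQbdd y) ⟨c, hc, rfl⟩)
  -- hard direction
  have hle2 : sInf Bs ≤ sSup A := by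
    suffices hex : ∃ y ∈ Pset n m H g x, ∀ c ∈ U, (∑ j, c j * y j) ≤ sSup A by
      obtain ⟨y, hyP, hy⟩ := hex
      have h1 : sInf Bs ≤ sSup (Qset n U y) := csInf_le hBbdd ⟨y, hyP, rfl⟩
      have h2 : sSup (Qset n U y) ≤ sSup A := by
        apply csSup_le (hQne y)
        rintro w ⟨c, hc, rfl⟩
        exact hy c hc
      linarith
    -- finite intersection property
    have hinter : (Pset n m H g x ∩
        ⋂ c : U, {y : Fin n → ℝ | (∑ j, (c:Fin n → ℝ) j * y j) ≤ sSup A}).Nonempty := by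
      apply hPco.inter_iInter_nonempty
      · intro c
        exact isClosed_le (continuous_finset_sum _ fun j _ =>
          continuous_const.mul (continuous_apply j)) continuous_const
      · intro u
        by_contra hcon
        -- every point of P is strictly beaten by some c in u
        have hcov : ∀ y ∈ Pset n m H g x, ∃ c ∈ u,
            sSup A < ∑ j, ((c : U) : Fin n → ℝ) j * y j := by
          intro y hyP
          by_contra hc2
          push_neg at hc2
          exact hcon ⟨y, hyP, Set.mem_iInter₂.2 fun c hcu => hc2 c hcu⟩
        -- separation in `↥u → ℝ`
        set Φ : (Fin n → ℝ) → (↥u → ℝ) :=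
          fun y c => (∑ j, ((c : U) : Fin n → ℝ) j * y j) - sSup A with hΦ
        set SA : Set (↥u → ℝ) := Φ '' (Pset n m H g x) with hSA
        set SB : Set (↥u → ℝ) := {z | ∀ c, z c ≤ 0} with hSB
        have hSAcomp : IsCompact SA := by
          apply hPco.image
          apply continuous_pi
          intro c
          exact (continuous_finset_sum _ fun j _ =>
            continuous_const.mul (continuous_apply j)).sub continuous_const
        have hSAconv : Convex ℝ SA := by
          rintro z1 ⟨y1, hy1, rfl⟩ z2 ⟨y2, hy2, rfl⟩ a b ha hb hab
          refine ⟨a • y1 + b • y2, hPcv hy1 hy2 ha hb hab, ?_⟩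
          funext c
          have hsum : (∑ j, ((c : U) : Fin n → ℝ) j * (a * y1 j + b * y2 j)) =
              a * (∑ j, ((c : U) : Fin n → ℝ) j * y1 j) +
              b * ∑ j, ((c : U) : Fin n → ℝ) j * y2 j := by
            rw [Finset.mul_sum, Finset.mul_sum, ← Finset.sum_add_distrib]
            refine Finset.sum_congr rfl fun j _ => ?_
            ring
          show (∑ j, ((c : U) : Fin n → ℝ) j * (a • y1 + b • y2) j) - sSup A =
            (a • Φ y1 + b • Φ y2) c
          simp only [Pi.add_apply, Pi.smul_apply, smul_eq_mul, hΦ]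
          rw [hsum]
          linear_combination (sSup A) * hab
        have hSBclosed : IsClosed SB := by
          rw [hSB, Set.setOf_forall]
          exact isClosed_iInter fun c => isClosed_le (continuous_apply c) continuous_const
        have hSBconv : Convex ℝ SB := by
          rintro z1 h1 z2 h2 a b ha hb hab c
          have e1 := h1 c
          have e2 := h2 c
          simp only [Pi.add_apply, Pi.smul_apply, smul_eq_mul]
          nlinarith
        have hdisj : Disjoint SA SB := by
          rw [Set.disjoint_left]
          rintro z ⟨y, hyP, rfl⟩ hmem
          obtain ⟨c, hcu, hclt⟩ := hcov y hyP
          have h2 : (∑ j, ((c : U) : Fin n → ℝ) j * y j) - sSup A ≤ 0 := hmem ⟨c, hcu⟩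
          linarith
        obtain ⟨f, uu, vv, hfA, huv, hfB⟩ :=
          geometric_hahn_banach_compact_closed hSAconv hSAcomp hSBconv hSBclosed hdisj
        have hv0 : vv < 0 := by
          have h0 := hfB 0 (fun c => le_refl 0)
          rw [map_zero] at h0
          exact h0
        -- the dual weights are nonnegative
        have hμ : ∀ c : ↥u, f (Pi.single c 1) ≤ 0 := by
          intro c
          by_contra hpos
          push_neg at hpos
          set t : ℝ := (1 - vv) / f (Pi.single c 1) with ht
          have ht0 : 0 < t := div_pos (by linarith) hpos
          have hb : (-t) • (Pi.single c (1:ℝ) : ↥u → ℝ) ∈ SB := by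
            intro c'
            simp only [Pi.smul_apply, smul_eq_mul, Pi.single_apply]
            by_cases h : c' = c
            · simp [h]; linarith
            · simp [h]
          have hlt := hfB _ hb
          rw [map_smul] at hlt
          have hlt' : vv < -t * f (Pi.single c 1) := by
            simpa using hlt
          have htt : t * f (Pi.single c 1) = 1 - vv :=
            div_mul_cancel₀ _ (ne_of_gt hpos)
          linarith
        have hfneg : ∀ y ∈ Pset n m H g x, f (Φ y) < 0 :=
          fun y hy => lt_trans (hfA _ ⟨y, hy, rfl⟩) (lt_trans huv hv0)
        set μ : ↥u → ℝ := fun c => -f (Pi.single c 1) with hμdef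
        have hμ0 : ∀ c, 0 ≤ μ c := by
          intro c
          simp only [hμdef, neg_nonneg]
          exact hμ c
        have hrep : ∀ y : Fin n → ℝ,
            (∑ c, μ c * ((∑ j, ((c : U) : Fin n → ℝ) j * y j) - sSup A)) = -f (Φ y) := by
          intro y
          rw [clm_pi_repr f (Φ y), ← Finset.sum_neg_distrib]
          refine Finset.sum_congr rfl fun c _ => ?_
          simp only [hμdef, hΦ]
          ring
        have hposS : ∀ y ∈ Pset n m H g x,
            0 < ∑ c, μ c * ((∑ j, ((c : U) : Fin n → ℝ) j * y j) - sSup A) := by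
          intro y hy
          rw [hrep y]
          linarith [hfneg y hy]
        have hS0 : 0 ≤ ∑ c, μ c := Finset.sum_nonneg fun c _ => hμ0 c
        have hSpos : 0 < ∑ c, μ c := by
          rcases hS0.lt_or_eq with h | h
          · exact h
          · exfalso
            have hzero : ∀ c ∈ Finset.univ, μ c = 0 :=
              (Finset.sum_eq_zero_iff_of_nonneg (fun c _ => hμ0 c)).1 h.symm
            have hp := hposS y0 (hRP hy0R)
            rw [Finset.sum_eq_zero (fun c hc => by rw [hzero c hc]; ring)] at hp
            exact lt_irrefl 0 hp
        -- the convex combination lies in U and strictly beats sSup A on all of P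
        set S : ℝ := ∑ c, μ c with hSdef
        set cbar : Fin n → ℝ := ∑ c, (μ c / S) • ((c : U) : Fin n → ℝ) with hcbar
        have hcbarU : cbar ∈ U := by
          apply hUconv.sum_mem (fun c _ => div_nonneg (hμ0 c) hS0)
          · rw [← Finset.sum_div]
            exact div_self (ne_of_gt hSpos)
          · exact fun c _ => (c : U).2
        -- contradiction with the definition of sSup A
        obtain ⟨yb, hybR, hwb⟩ := hWmem cbar
        have hybP := hRP hybR
        have hgt : sSup A < ∑ j, cbar j * yb j := by
          have hdotbar : (∑ j, cbar j * yb j) =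
              ∑ c, (μ c / S) * ∑ j, ((c : U) : Fin n → ℝ) j * yb j := by
            have hcbj : ∀ j, cbar j = ∑ c, (μ c / S) * ((c : U) : Fin n → ℝ) j := by
              intro j
              simp [hcbar, Finset.sum_apply, Pi.smul_apply, smul_eq_mul]
            calc (∑ j, cbar j * yb j)
                = ∑ j, ∑ c, (μ c / S) * ((c : U) : Fin n → ℝ) j * yb j := by
                  refine Finset.sum_congr rfl fun j _ => ?_
                  rw [hcbj j, Finset.sum_mul]
              _ = ∑ c, ∑ j, (μ c / S) * ((c : U) : Fin n → ℝ) j * yb j :=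
                  Finset.sum_comm
              _ = ∑ c, (μ c / S) * ∑ j, ((c : U) : Fin n → ℝ) j * yb j := by
                  refine Finset.sum_congr rfl fun c _ => ?_
                  rw [Finset.mul_sum]
                  exact Finset.sum_congr rfl fun j _ => by ring
          have h1 := hposS yb hybP
          have hexp : (∑ c, μ c * ((∑ j, ((c : U) : Fin n → ℝ) j * yb j) - sSup A)) =
              (∑ c, μ c * ∑ j, ((c : U) : Fin n → ℝ) j * yb j) - S * sSup A := by
            rw [hSdef, Finset.sum_mul, ← Finset.sum_sub_distrib]
            exact Finset.sum_congr rfl fun c _ => by ring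
          rw [hexp] at h1
          have hdiv : (∑ c, (μ c / S) * ∑ j, ((c : U) : Fin n → ℝ) j * yb j) =
              (∑ c, μ c * ∑ j, ((c : U) : Fin n → ℝ) j * yb j) / S := by
            rw [Finset.sum_div]
            exact Finset.sum_congr rfl fun c _ => by ring
          rw [hdotbar, hdiv, lt_div_iff₀ hSpos]
          linarith
        have hlecs : sInf (Wset n m H g x cbar) ≤ sSup A :=
          le_csSup hAbdd ⟨cbar, hcbarU, rfl⟩
        rw [hwb] at hlecs
        linarith
    obtain ⟨y, hyP, hyI⟩ := hinter
    refine ⟨y, hyP, fun c hc => ?_⟩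
    exact Set.mem_iInter.1 hyI ⟨c, hc⟩
  linarith
end

section
/- Let c₁, …, c_K ∈ ℝⁿ₊, C ∈ ℝⁿ₊, and define the lifted polytope P = {(δ, λ) ∈ ℝⁿ₊ × ℝᴷ₊ : δ = ∑ₖ λₖ cₖ, ∑ₖ λₖ = 1} ⊂ ℝⁿ⁺ᴷ. For any x ∈ {0,1}ⁿ, writing x' = (x, 1) ∈ {0,1}ⁿ⁺ᴷ (the λ-coordinates of x' all equal 1) and first-stage cost vector C' = (C, 0): C'ᵀx' + max_{(δ,λ)∈P} (δ,λ)ᵀ(1 − x') = Cᵀx + max_{k∈[K]} cₖᵀ(1 − x). Consequently min over x ∈ {0,1}ⁿ of the left side equals min over x of the right side. -/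
/-- The lifted H-polytope gadget: with the `λ`-coordinates of the first-stage
solution fixed to `1` (at first-stage cost `0`), the adversarial maximum over
the lifted polytope `P = {(δ, λ) ≥ 0 : δ = ∑ λₖcₖ, ∑ λₖ = 1}` equals
`max_k (Cᵀx + cₖᵀ(1 − x))`; hence the two `RTSt₁` optima coincide. -/
theorem stmt16 (n K : ℕ) (hK : 0 < K) (c : Fin K → Fin n → ℝ)
    (hc : ∀ k i, 0 ≤ c k i) (C : Fin n → ℝ) (hC : ∀ i, 0 ≤ C i) :
    (∀ x : Fin n → ℝ, (∀ i, x i = 0 ∨ x i = 1) →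
      sSup {v : ℝ | ∃ (δ : Fin n → ℝ) (lam : Fin K → ℝ),
          (∀ k, 0 ≤ lam k) ∧ (∑ k, lam k) = 1 ∧
          (∀ i, δ i = ∑ k, lam k * c k i) ∧ (∀ i, 0 ≤ δ i) ∧
          v = ((∑ i, C i * x i) + ∑ _k : Fin K, (0 : ℝ) * 1) +
            ((∑ i, δ i * (1 - x i)) + ∑ k, lam k * (1 - (1 : ℝ)))} =
        sSup {v : ℝ | ∃ k : Fin K, v = (∑ i, C i * x i) + ∑ i, c k i * (1 - x i)}) ∧
    sInf {v : ℝ | ∃ x : Fin n → ℝ, (∀ i, x i = 0 ∨ x i = 1) ∧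
        v = sSup {w : ℝ | ∃ (δ : Fin n → ℝ) (lam : Fin K → ℝ),
          (∀ k, 0 ≤ lam k) ∧ (∑ k, lam k) = 1 ∧
          (∀ i, δ i = ∑ k, lam k * c k i) ∧ (∀ i, 0 ≤ δ i) ∧
          w = ((∑ i, C i * x i) + ∑ _k : Fin K, (0 : ℝ) * 1) +
            ((∑ i, δ i * (1 - x i)) + ∑ k, lam k * (1 - (1 : ℝ)))}} =
      sInf {v : ℝ | ∃ x : Fin n → ℝ, (∀ i, x i = 0 ∨ x i = 1) ∧
        v = sSup {w : ℝ | ∃ k : Fin K,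
          w = (∑ i, C i * x i) + ∑ i, c k i * (1 - x i)}} := by
  have main : ∀ x : Fin n → ℝ,
      sSup {v : ℝ | ∃ (δ : Fin n → ℝ) (lam : Fin K → ℝ),
          (∀ k, 0 ≤ lam k) ∧ (∑ k, lam k) = 1 ∧
          (∀ i, δ i = ∑ k, lam k * c k i) ∧ (∀ i, 0 ≤ δ i) ∧
          v = ((∑ i, C i * x i) + ∑ _k : Fin K, (0 : ℝ) * 1) +
            ((∑ i, δ i * (1 - x i)) + ∑ k, lam k * (1 - (1 : ℝ)))} =
        sSup {v : ℝ | ∃ k : Fin K, v = (∑ i, C i * x i) + ∑ i, c k i * (1 - x i)} := by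
    intro x
    haveI : Nonempty (Fin K) := ⟨⟨0, hK⟩⟩
    set Cx : ℝ := ∑ i, C i * x i with hCx
    set b : Fin K → ℝ := fun k => ∑ i, c k i * (1 - x i) with hb
    set a : Fin K → ℝ := fun k => Cx + b k with ha
    obtain ⟨k0, -, hk0⟩ :=
      Finset.exists_max_image (Finset.univ : Finset (Fin K)) a ⟨⟨0, hK⟩, Finset.mem_univ _⟩
    have hmem1 : ∀ v : ℝ,
        (∃ (δ : Fin n → ℝ) (lam : Fin K → ℝ),
          (∀ k, 0 ≤ lam k) ∧ (∑ k, lam k) = 1 ∧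
          (∀ i, δ i = ∑ k, lam k * c k i) ∧ (∀ i, 0 ≤ δ i) ∧
          v = (Cx + ∑ _k : Fin K, (0 : ℝ) * 1) +
            ((∑ i, δ i * (1 - x i)) + ∑ k, lam k * (1 - (1 : ℝ)))) ↔
        (∃ lam : Fin K → ℝ, (∀ k, 0 ≤ lam k) ∧ (∑ k, lam k) = 1 ∧
          v = Cx + ∑ k, lam k * b k) := by
      intro v
      constructor
      · rintro ⟨δ, lam, h0, h1, hδ, -, rfl⟩
        refine ⟨lam, h0, h1, ?_⟩
        have : (∑ i, δ i * (1 - x i)) = ∑ k, lam k * b k := by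
          simp only [hδ, hb, Finset.sum_mul, Finset.mul_sum, mul_assoc]
          exact Finset.sum_comm
        simp [this]
      · rintro ⟨lam, h0, h1, rfl⟩
        refine ⟨fun i => ∑ k, lam k * c k i, lam, h0, h1, fun i => rfl,
          fun i => Finset.sum_nonneg fun k _ => mul_nonneg (h0 k) (hc k i), ?_⟩
        have : (∑ i, (∑ k, lam k * c k i) * (1 - x i)) = ∑ k, lam k * b k := by
          simp only [hb, Finset.sum_mul, Finset.mul_sum, mul_assoc]
          exact Finset.sum_comm
        simp [this]
    have hS1 : {v : ℝ | ∃ (δ : Fin n → ℝ) (lam : Fin K → ℝ),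
          (∀ k, 0 ≤ lam k) ∧ (∑ k, lam k) = 1 ∧
          (∀ i, δ i = ∑ k, lam k * c k i) ∧ (∀ i, 0 ≤ δ i) ∧
          v = (Cx + ∑ _k : Fin K, (0 : ℝ) * 1) +
            ((∑ i, δ i * (1 - x i)) + ∑ k, lam k * (1 - (1 : ℝ)))} =
        {v : ℝ | ∃ lam : Fin K → ℝ, (∀ k, 0 ≤ lam k) ∧ (∑ k, lam k) = 1 ∧
          v = Cx + ∑ k, lam k * b k} := Set.ext hmem1
    have hS2 : {v : ℝ | ∃ k : Fin K, v = Cx + b k} = Set.range a := by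
      ext v; simp [ha, eq_comm]
    rw [hS1, hS2]
    -- elements of S1' are bounded by a k0
    have hbound : ∀ v ∈ {v : ℝ | ∃ lam : Fin K → ℝ, (∀ k, 0 ≤ lam k) ∧
        (∑ k, lam k) = 1 ∧ v = Cx + ∑ k, lam k * b k}, v ≤ a k0 := by
      rintro v ⟨lam, h0, h1, rfl⟩
      have hbk : ∀ k, b k ≤ b k0 := fun k => by
        have := hk0 k (Finset.mem_univ k); simpa [ha] using this
      calc Cx + ∑ k, lam k * b k ≤ Cx + ∑ k, lam k * b k0 :=
            add_le_add le_rfl (Finset.sum_le_sum fun k _ =>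
              mul_le_mul_of_nonneg_left (hbk k) (h0 k))
        _ = Cx + b k0 := by rw [← Finset.sum_mul, h1, one_mul]
        _ = a k0 := rfl
    have hne1 : {v : ℝ | ∃ lam : Fin K → ℝ, (∀ k, 0 ≤ lam k) ∧
        (∑ k, lam k) = 1 ∧ v = Cx + ∑ k, lam k * b k}.Nonempty := by
      refine ⟨Cx + ∑ k, (fun j => if j = k0 then (1:ℝ) else 0) k * b k,
        fun j => if j = k0 then 1 else 0, fun k => by positivity, by simp, rfl⟩
    have hbdd2 : BddAbove (Set.range a) := (Set.finite_range a).bddAbove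
    apply le_antisymm
    · exact csSup_le hne1 fun v hv => le_trans (hbound v hv)
        (le_csSup hbdd2 ⟨k0, rfl⟩)
    · refine csSup_le (Set.range_nonempty a) ?_
      rintro v ⟨k, rfl⟩
      refine le_csSup ⟨a k0, hbound⟩ ?_
      exact ⟨fun j => if j = k then 1 else 0, fun j => by positivity, by simp, by
        simp [ha, Finset.sum_ite_eq', ite_mul]⟩
  refine ⟨fun x _ => main x, ?_⟩
  congr 1
  ext v
  constructor
  · rintro ⟨x, hx, rfl⟩; exact ⟨x, hx, main x⟩
  · rintro ⟨x, hx, rfl⟩; exact ⟨x, hx, (main x).symm⟩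
end

section
/- Let f : [0,1] → ℝ be defined by f(π) = Γπ + ∑_{l∈S} g_l(π), where for each l in a finite index set S, g_l(π) is the optimal value of the LP: minimize ∑_{j∈T_l} c̲ⱼ uⱼ + ∑_{j∈T_l}(c̲ⱼ + dⱼ) vⱼ subject to ∑_{j∈T_l}(uⱼ + vⱼ) = 1, 0 ≤ uⱼ ≤ π, 0 ≤ vⱼ ≤ 1 − π (with c̲ⱼ, dⱼ ≥ 0, T_l finite and large enough for feasibility). Then f attains its minimum over [0,1] at some π ∈ {0} ∪ {1/p : p ∈ {1, …, n}}, where n = ∑_l |T_l|. -/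
open Finset

namespace Stmt18Aux

def valSet {n : ℕ} (T : Finset (Fin n)) (cb d : Fin n → ℝ) (π : ℝ) : Set ℝ :=
  {v : ℝ | ∃ u w : Fin n → ℝ,
    (∀ j ∈ T, 0 ≤ u j ∧ u j ≤ π ∧ 0 ≤ w j ∧ w j ≤ 1 - π) ∧
    (∑ j ∈ T, (u j + w j)) = 1 ∧
    v = ∑ j ∈ T, (cb j * u j + (cb j + d j) * w j)}

lemma valSet_nonempty {n : ℕ} (T : Finset (Fin n)) (hT : T.Nonempty) (cb d : Fin n → ℝ)
    {π : ℝ} (h0 : 0 ≤ π) (h1 : π ≤ 1) : (valSet T cb d π).Nonempty := by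
  classical
  obtain ⟨j0, hj0⟩ := hT
  refine ⟨_, fun j => if j = j0 then π else 0, fun j => if j = j0 then 1 - π else 0, ?_, ?_, rfl⟩
  · intro j hj
    by_cases h : j = j0 <;> simp [h] <;> constructor <;> linarith
  · have h : ∀ j ∈ T, ((if j = j0 then π else 0) + (if j = j0 then 1 - π else 0))
        = (if j = j0 then (1:ℝ) else 0) := by
      intro j _; by_cases h : j = j0 <;> simp [h]
    rw [Finset.sum_congr rfl h, Finset.sum_ite_eq' T j0 (fun _ => (1:ℝ))]
    simp [hj0]

lemma valSet_bddBelow {n : ℕ} (T : Finset (Fin n)) (cb d : Fin n → ℝ)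
    (hcb : ∀ j, 0 ≤ cb j) (hd : ∀ j, 0 ≤ d j) (π : ℝ) :
    BddBelow (valSet T cb d π) := by
  refine ⟨0, fun v hv => ?_⟩
  obtain ⟨u, w, hfeas, -, rfl⟩ := hv
  refine Finset.sum_nonneg fun j hj => ?_
  obtain ⟨h1, -, h3, -⟩ := hfeas j hj
  have := hcb j; have := hd j
  nlinarith

set_option maxHeartbeats 1000000 in
lemma key {n : ℕ} (T : Finset (Fin n)) (hT : T.Nonempty) (cb d : Fin n → ℝ)
    (hcb : ∀ j, 0 ≤ cb j) (hd : ∀ j, 0 ≤ d j)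
    {π1 π2 t : ℝ} (h10 : 0 ≤ π1) (h12 : π1 < π2) (h21 : π2 ≤ 1)
    (ht0 : 0 < t) (ht1 : t < 1)
    (H : ∀ a b : ℕ, a ≤ T.card → b ≤ T.card →
      (a : ℝ) * π1 + (b : ℝ) * (1 - π1) < 1 → (a : ℝ) * π2 + (b : ℝ) * (1 - π2) ≤ 1) :
    t * sInf (valSet T cb d π1) + (1 - t) * sInf (valSet T cb d π2) ≤
      sInf (valSet T cb d (t * π1 + (1 - t) * π2)) := by
  classical
  set π := t * π1 + (1 - t) * π2 with hπdef
  have h1t : (0:ℝ) < 1 - t := by linarith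
  have hπ1 : π1 ≤ π := by nlinarith
  have hπ2 : π ≤ π2 := by nlinarith
  have hπ0 : 0 ≤ π := le_trans h10 hπ1
  have hπle1 : π ≤ 1 := le_trans hπ2 h21
  refine le_of_forall_pos_le_add fun ε hε => ?_
  obtain ⟨v, hv, hvlt⟩ := exists_lt_of_csInf_lt (valSet_nonempty T hT cb d hπ0 hπle1)
      (lt_add_of_pos_right _ hε)
  obtain ⟨u, w, hfeas, hsum, rfl⟩ := hv
  -- normalization : shift mass from w to u
  set u' : Fin n → ℝ := fun j => min π (u j + w j) with hu'def
  set w' : Fin n → ℝ := fun j => u j + w j - u' j with hw'def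
  have hfeas' : ∀ j ∈ T, 0 ≤ u' j ∧ u' j ≤ π ∧ 0 ≤ w' j ∧ w' j ≤ 1 - π := by
    intro j hj
    obtain ⟨h1, h2, h3, h4⟩ := hfeas j hj
    have hle : u j ≤ u' j := le_min h2 (by linarith)
    refine ⟨le_min hπ0 (by linarith), min_le_left _ _, ?_, ?_⟩
    · simp only [hw'def]; have := min_le_right π (u j + w j); linarith
    · simp only [hw'def]; have : u j ≤ u' j := hle; simp only [hu'def] at this ⊢; linarith
  have hnorm : ∀ j ∈ T, 0 < w' j → u' j = π := by
    intro j hj hpos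
    simp only [hw'def] at hpos
    have : u' j < u j + w j := by linarith
    simp only [hu'def] at this ⊢
    rcases min_cases π (u j + w j) with ⟨h, _⟩ | ⟨h, hlt⟩
    · exact h
    · linarith
  have hsum' : (∑ j ∈ T, (u' j + w' j)) = 1 := by
    rw [← hsum]; exact Finset.sum_congr rfl fun j _ => by simp [hw'def]
  have hval' : (∑ j ∈ T, (cb j * u' j + (cb j + d j) * w' j)) ≤
      ∑ j ∈ T, (cb j * u j + (cb j + d j) * w j) := by
    refine Finset.sum_le_sum fun j hj => ?_
    obtain ⟨h1, h2, h3, h4⟩ := hfeas j hj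
    have hle : u j ≤ u' j := le_min h2 (by linarith)
    simp only [hw'def]
    nlinarith [mul_nonneg (hd j) (sub_nonneg.2 hle)]
  -- interpolation bounds
  set A : Fin n → ℝ := fun j => max 0 ((u' j - (1 - t) * π2) / t) with hAdef
  set B : Fin n → ℝ := fun j => min π1 (u' j / t) with hBdef
  set A' : Fin n → ℝ := fun j => max 0 ((w' j - (1 - t) * (1 - π2)) / t) with hA'def
  set B' : Fin n → ℝ := fun j => min (1 - π1) (w' j / t) with hB'def
  have hAB : ∀ j ∈ T, A j ≤ B j := by
    intro j hj
    obtain ⟨h1, h2, h3, h4⟩ := hfeas' j hj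
    refine max_le (le_min h10 (div_nonneg h1 ht0.le)) (le_min ?_ ?_)
    · rw [div_le_iff₀ ht0]; nlinarith
    · rw [div_le_div_iff₀ ht0 ht0]
      nlinarith [mul_nonneg (mul_nonneg h1t.le (le_trans h10 h12.le)) ht0.le]
  have hA'B' : ∀ j ∈ T, A' j ≤ B' j := by
    intro j hj
    obtain ⟨h1, h2, h3, h4⟩ := hfeas' j hj
    refine max_le (le_min (by linarith) (div_nonneg h3 ht0.le)) (le_min ?_ ?_)
    · rw [div_le_iff₀ ht0]; nlinarith
    · rw [div_le_div_iff₀ ht0 ht0]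
      nlinarith [mul_nonneg (mul_nonneg h1t.le (by linarith : (0:ℝ) ≤ 1 - π2)) ht0.le]
  set Smin := ∑ j ∈ T, (A j + A' j) with hSmindef
  set Smax := ∑ j ∈ T, (B j + B' j) with hSmaxdef
  -- Claim: 1 ≤ Smax
  have hSmax : 1 ≤ Smax := by
    set Au := T.filter (fun j => t * π1 < u' j) with hAudef
    set Bw := T.filter (fun j => t * (1 - π1) < w' j) with hBwdef
    have hBval1 : ∀ j ∈ Au, B j = π1 := by
      intro j hj
      have h := (Finset.mem_filter.1 (hAudef ▸ hj)).2
      simp only [hBdef]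
      exact min_eq_left (by rw [le_div_iff₀ ht0]; nlinarith)
    have hBval2 : ∀ j ∈ T.filter (fun j => ¬ t * π1 < u' j), B j = u' j / t := by
      intro j hj
      have h := (Finset.mem_filter.1 hj).2
      push_neg at h
      simp only [hBdef]
      exact min_eq_right (by rw [div_le_iff₀ ht0]; nlinarith)
    have hB'val1 : ∀ j ∈ Bw, B' j = 1 - π1 := by
      intro j hj
      have h := (Finset.mem_filter.1 (hBwdef ▸ hj)).2
      simp only [hB'def]
      exact min_eq_left (by rw [le_div_iff₀ ht0]; nlinarith)
    have hB'val2 : ∀ j ∈ T.filter (fun j => ¬ t * (1 - π1) < w' j), B' j = w' j / t := by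
      intro j hj
      have h := (Finset.mem_filter.1 hj).2
      push_neg at h
      simp only [hB'def]
      exact min_eq_right (by rw [div_le_iff₀ ht0]; nlinarith)
    have hEB : ∑ j ∈ T, B j = Au.card * π1 + (∑ j ∈ T.filter (fun j => ¬ t * π1 < u' j), u' j) / t := by
      rw [← Finset.sum_filter_add_sum_filter_not T (fun j => t * π1 < u' j) B, ← hAudef,
        Finset.sum_congr rfl hBval1, Finset.sum_congr rfl hBval2,
        Finset.sum_const, nsmul_eq_mul, Finset.sum_div]
    have hEB' : ∑ j ∈ T, B' j = Bw.card * (1 - π1)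
        + (∑ j ∈ T.filter (fun j => ¬ t * (1 - π1) < w' j), w' j) / t := by
      rw [← Finset.sum_filter_add_sum_filter_not T (fun j => t * (1 - π1) < w' j) B', ← hBwdef,
        Finset.sum_congr rfl hB'val1, Finset.sum_congr rfl hB'val2,
        Finset.sum_const, nsmul_eq_mul, Finset.sum_div]
    have hSmaxeq : Smax = Au.card * π1 + Bw.card * (1 - π1)
        + ((∑ j ∈ T.filter (fun j => ¬ t * π1 < u' j), u' j)
          + (∑ j ∈ T.filter (fun j => ¬ t * (1 - π1) < w' j), w' j)) / t := by
      rw [hSmaxdef, Finset.sum_add_distrib, hEB, hEB', add_div]; ring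
    set Ru := ∑ j ∈ T.filter (fun j => ¬ t * π1 < u' j), u' j with hRudef
    set Rw := ∑ j ∈ T.filter (fun j => ¬ t * (1 - π1) < w' j), w' j with hRwdef
    have hRu0 : 0 ≤ Ru := Finset.sum_nonneg fun j hj =>
      (hfeas' j (Finset.mem_filter.1 hj).1).1
    have hRw0 : 0 ≤ Rw := Finset.sum_nonneg fun j hj =>
      (hfeas' j (Finset.mem_filter.1 hj).1).2.2.1
    by_cases hcase : (Au.card : ℝ) * π1 + (Bw.card : ℝ) * (1 - π1) < 1
    · have hH2 : (Au.card : ℝ) * π2 + (Bw.card : ℝ) * (1 - π2) ≤ 1 :=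
        H Au.card Bw.card (Finset.card_filter_le _ _) (Finset.card_filter_le _ _) hcase
      -- lower bound on Ru + Rw
      have hUsum : (∑ j ∈ Au, u' j) + Ru = ∑ j ∈ T, u' j := by
        rw [hRudef, hAudef, Finset.sum_filter_add_sum_filter_not]
      have hWsum : (∑ j ∈ Bw, w' j) + Rw = ∑ j ∈ T, w' j := by
        rw [hRwdef, hBwdef, Finset.sum_filter_add_sum_filter_not]
      have hUW : (∑ j ∈ T, u' j) + (∑ j ∈ T, w' j) = 1 := by
        rw [← Finset.sum_add_distrib]; exact hsum'
      have hAuB : ∑ j ∈ Au, u' j ≤ Au.card * π := by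
        rw [← nsmul_eq_mul]
        exact Finset.sum_le_card_nsmul _ _ _ fun j hj =>
          (hfeas' j (Finset.mem_filter.1 hj).1).2.1
      have hBwB : ∑ j ∈ Bw, w' j ≤ Bw.card * (1 - π) := by
        rw [← nsmul_eq_mul]
        exact Finset.sum_le_card_nsmul _ _ _ fun j hj =>
          (hfeas' j (Finset.mem_filter.1 hj).1).2.2.2
      have hRuRw : 1 - (Au.card : ℝ) * π - (Bw.card : ℝ) * (1 - π) ≤ Ru + Rw := by
        linarith
      have htS : t * Smax = t * ((Au.card : ℝ) * π1 + (Bw.card : ℝ) * (1 - π1)) + (Ru + Rw) := by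
        rw [hSmaxeq]; field_simp
      have hfin : t ≤ t * Smax := by
        rw [htS]
        have hkey : t * ((Au.card : ℝ) * π1 + (Bw.card : ℝ) * (1 - π1))
            + (1 - (Au.card : ℝ) * π - (Bw.card : ℝ) * (1 - π)) - t
            = (1 - t) * (1 - ((Au.card : ℝ) * π2 + (Bw.card : ℝ) * (1 - π2))) := by
          rw [hπdef]; ring
        nlinarith [mul_nonneg h1t.le (sub_nonneg.2 hH2)]
      exact le_of_mul_le_mul_left (by linarith) ht0
    · push_neg at hcase
      have htS : t * Smax = t * ((Au.card : ℝ) * π1 + (Bw.card : ℝ) * (1 - π1)) + (Ru + Rw) := by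
        rw [hSmaxeq]; field_simp
      have : t ≤ t * Smax := by rw [htS]; nlinarith
      exact le_of_mul_le_mul_left (by linarith) ht0
  have hne1t : (1:ℝ) - t ≠ 0 := h1t.ne'
  -- Claim: Smin ≤ 1
  have hSmin : Smin ≤ 1 := by
    set C2 : Fin n → ℝ := fun j => min π2 (u' j / (1 - t)) with hC2def
    set D2 : Fin n → ℝ := fun j => min (1 - π2) (w' j / (1 - t)) with hD2def
    have hidA : ∀ j ∈ T, t * A j = u' j - (1 - t) * C2 j := by
      intro j hj
      obtain ⟨h1, h2, h3, h4⟩ := hfeas' j hj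
      simp only [hAdef, hC2def]
      rcases le_or_gt (u' j) ((1 - t) * π2) with h | h
      · rw [max_eq_left (by rw [div_le_iff₀ ht0]; linarith),
          min_eq_right (by rw [div_le_iff₀ h1t]; linarith)]
        field_simp; ring
      · rw [max_eq_right (by rw [le_div_iff₀ ht0]; linarith),
          min_eq_left (by rw [le_div_iff₀ h1t]; linarith)]
        field_simp
    have hidA' : ∀ j ∈ T, t * A' j = w' j - (1 - t) * D2 j := by
      intro j hj
      obtain ⟨h1, h2, h3, h4⟩ := hfeas' j hj
      simp only [hA'def, hD2def]
      rcases le_or_gt (w' j) ((1 - t) * (1 - π2)) with h | h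
      · rw [max_eq_left (by rw [div_le_iff₀ ht0]; linarith),
          min_eq_right (by rw [div_le_iff₀ h1t]; linarith)]
        field_simp; ring
      · rw [max_eq_right (by rw [le_div_iff₀ ht0]; linarith),
          min_eq_left (by rw [le_div_iff₀ h1t]; linarith)]
        field_simp
    have htSmin : t * Smin = 1 - (1 - t) * (∑ j ∈ T, (C2 j + D2 j)) := by
      have e : ∀ j ∈ T, t * (A j + A' j) = (u' j + w' j) - (1 - t) * (C2 j + D2 j) := by
        intro j hj
        have h1 := hidA j hj
        have h2 := hidA' j hj
        nlinarith [h1, h2]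
      rw [hSmindef, Finset.mul_sum, Finset.sum_congr rfl e, Finset.sum_sub_distrib,
        ← Finset.mul_sum, hsum']
    have hS2 : 1 ≤ ∑ j ∈ T, (C2 j + D2 j) := by
      by_cases hex : ∃ j0 ∈ T, (1 - t) * (1 - π2) < w' j0
      · obtain ⟨j0, hj0T, hj0⟩ := hex
        have hw'pos : 0 < w' j0 :=
          lt_of_le_of_lt (mul_nonneg h1t.le (by linarith)) hj0
        have hu'π : u' j0 = π := hnorm j0 hj0T hw'pos
        have hterm : C2 j0 + D2 j0 = 1 := by
          simp only [hC2def, hD2def]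
          rw [min_eq_left (by rw [hu'π, le_div_iff₀ h1t]; nlinarith [mul_nonneg ht0.le h10]),
            min_eq_left (by rw [le_div_iff₀ h1t]; linarith)]
          ring
        refine le_trans (le_of_eq hterm.symm)
          (Finset.single_le_sum (f := fun j => C2 j + D2 j) ?_ hj0T)
        intro j hj
        obtain ⟨h1, h2, h3, h4⟩ := hfeas' j hj
        have hc : 0 ≤ C2 j := le_min (by linarith) (div_nonneg h1 h1t.le)
        have hdd : 0 ≤ D2 j := le_min (by linarith) (div_nonneg h3 h1t.le)
        exact add_nonneg hc hdd
      · push_neg at hex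
        have hterm : ∀ j ∈ T, u' j + w' j ≤ C2 j + D2 j := by
          intro j hj
          obtain ⟨h1, h2, h3, h4⟩ := hfeas' j hj
          have hC : u' j ≤ C2 j := le_min (by linarith)
            (by rw [le_div_iff₀ h1t]; nlinarith [mul_nonneg ht0.le h1])
          have hD : w' j ≤ D2 j := le_min
            (by nlinarith [hex j hj, mul_nonneg ht0.le (by linarith : (0:ℝ) ≤ 1 - π2)])
            (by rw [le_div_iff₀ h1t]; nlinarith [mul_nonneg ht0.le h3])
          linarith
        calc (1:ℝ) = ∑ j ∈ T, (u' j + w' j) := hsum'.symm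
          _ ≤ _ := Finset.sum_le_sum hterm
    have : t * Smin ≤ t := by
      rw [htSmin]
      nlinarith [mul_le_mul_of_nonneg_left hS2 h1t.le]
    exact le_of_mul_le_mul_left (by linarith) ht0
  -- interpolation parameter
  have hminmax : Smin ≤ Smax :=
    Finset.sum_le_sum fun j hj => add_le_add (hAB j hj) (hA'B' j hj)
  set lam := if Smax - Smin = 0 then (0:ℝ) else (1 - Smin) / (Smax - Smin) with hlamdef
  have hDnn : (0:ℝ) ≤ Smax - Smin := by linarith
  have hlam0 : 0 ≤ lam := by
    rw [hlamdef]; split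
    · exact le_refl 0
    · next h => exact div_nonneg (by linarith) hDnn
  have hlam1 : lam ≤ 1 := by
    rw [hlamdef]; split
    · exact zero_le_one
    · next h =>
      rw [div_le_one (lt_of_le_of_ne hDnn (Ne.symm h))]
      linarith
  have hlamsum : Smin + lam * (Smax - Smin) = 1 := by
    rw [hlamdef]; split
    · next h => linarith
    · next h => rw [div_mul_cancel₀ _ h]; ring
  -- the two decomposed solutions
  set u1 : Fin n → ℝ := fun j => A j + lam * (B j - A j) with hu1def
  set w1 : Fin n → ℝ := fun j => A' j + lam * (B' j - A' j) with hw1def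
  set u2 : Fin n → ℝ := fun j => (u' j - t * u1 j) / (1 - t) with hu2def
  set w2 : Fin n → ℝ := fun j => (w' j - t * w1 j) / (1 - t) with hw2def
  have hu1b : ∀ j ∈ T, A j ≤ u1 j ∧ u1 j ≤ B j := by
    intro j hj
    have h := hAB j hj
    constructor <;> simp only [hu1def] <;> nlinarith
  have hw1b : ∀ j ∈ T, A' j ≤ w1 j ∧ w1 j ≤ B' j := by
    intro j hj
    have h := hA'B' j hj
    constructor <;> simp only [hw1def] <;> nlinarith
  have hfeas1 : ∀ j ∈ T, 0 ≤ u1 j ∧ u1 j ≤ π1 ∧ 0 ≤ w1 j ∧ w1 j ≤ 1 - π1 := by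
    intro j hj
    obtain ⟨ha, hb⟩ := hu1b j hj
    obtain ⟨ha', hb'⟩ := hw1b j hj
    have h0A : 0 ≤ A j := le_max_left _ _
    have h0A' : 0 ≤ A' j := le_max_left _ _
    have hBle : B j ≤ π1 := min_le_left _ _
    have hB'le : B' j ≤ 1 - π1 := min_le_left _ _
    exact ⟨le_trans h0A ha, le_trans hb hBle, le_trans h0A' ha', le_trans hb' hB'le⟩
  have hsum1 : (∑ j ∈ T, (u1 j + w1 j)) = 1 := by
    have e : ∀ j ∈ T, u1 j + w1 j = (A j + A' j) + lam * ((B j + B' j) - (A j + A' j)) := by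
      intro j _
      simp only [hu1def, hw1def]; ring
    rw [Finset.sum_congr rfl e, Finset.sum_add_distrib, ← Finset.mul_sum,
      Finset.sum_sub_distrib, ← hSmindef, ← hSmaxdef]
    exact hlamsum
  have hfeas2 : ∀ j ∈ T, 0 ≤ u2 j ∧ u2 j ≤ π2 ∧ 0 ≤ w2 j ∧ w2 j ≤ 1 - π2 := by
    intro j hj
    obtain ⟨ha, hb⟩ := hu1b j hj
    obtain ⟨ha', hb'⟩ := hw1b j hj
    have hBu : B j ≤ u' j / t := min_le_right _ _
    have hAu : (u' j - (1 - t) * π2) / t ≤ A j := le_max_right _ _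
    have hB'w : B' j ≤ w' j / t := min_le_right _ _
    have hA'w : (w' j - (1 - t) * (1 - π2)) / t ≤ A' j := le_max_right _ _
    have h1 : u1 j * t ≤ u' j := (le_div_iff₀ ht0).1 (le_trans hb hBu)
    have h2 : u' j - (1 - t) * π2 ≤ A j * t := (div_le_iff₀ ht0).1 hAu
    have h3 : w1 j * t ≤ w' j := (le_div_iff₀ ht0).1 (le_trans hb' hB'w)
    have h4 : w' j - (1 - t) * (1 - π2) ≤ A' j * t := (div_le_iff₀ ht0).1 hA'w
    have h5 : A j * t ≤ u1 j * t := mul_le_mul_of_nonneg_right ha ht0.le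
    have h6 : A' j * t ≤ w1 j * t := mul_le_mul_of_nonneg_right ha' ht0.le
    refine ⟨?_, ?_, ?_, ?_⟩
    · simp only [hu2def]; exact div_nonneg (by linarith) h1t.le
    · simp only [hu2def]; rw [div_le_iff₀ h1t]; linarith
    · simp only [hw2def]; exact div_nonneg (by linarith) h1t.le
    · simp only [hw2def]; rw [div_le_iff₀ h1t]; linarith
  have hsum2 : (∑ j ∈ T, (u2 j + w2 j)) = 1 := by
    have e : ∀ j ∈ T, u2 j + w2 j = ((u' j + w' j) - t * (u1 j + w1 j)) / (1 - t) := by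
      intro j _
      simp only [hu2def, hw2def]
      field_simp
      ring
    rw [Finset.sum_congr rfl e, ← Finset.sum_div, Finset.sum_sub_distrib, ← Finset.mul_sum,
      hsum', hsum1]
    field_simp
  have hle1 : sInf (valSet T cb d π1) ≤ ∑ j ∈ T, (cb j * u1 j + (cb j + d j) * w1 j) :=
    csInf_le (valSet_bddBelow T cb d hcb hd π1) ⟨u1, w1, hfeas1, hsum1, rfl⟩
  have hle2 : sInf (valSet T cb d π2) ≤ ∑ j ∈ T, (cb j * u2 j + (cb j + d j) * w2 j) :=
    csInf_le (valSet_bddBelow T cb d hcb hd π2) ⟨u2, w2, hfeas2, hsum2, rfl⟩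
  have hcomb : t * (∑ j ∈ T, (cb j * u1 j + (cb j + d j) * w1 j))
      + (1 - t) * (∑ j ∈ T, (cb j * u2 j + (cb j + d j) * w2 j))
      = ∑ j ∈ T, (cb j * u' j + (cb j + d j) * w' j) := by
    rw [Finset.mul_sum, Finset.mul_sum, ← Finset.sum_add_distrib]
    refine Finset.sum_congr rfl fun j hj => ?_
    simp only [hu2def, hw2def]
    field_simp
    ring
  have hfinal : t * sInf (valSet T cb d π1) + (1 - t) * sInf (valSet T cb d π2)
      ≤ ∑ j ∈ T, (cb j * u' j + (cb j + d j) * w' j) := by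
    rw [← hcomb]
    have e1 := mul_le_mul_of_nonneg_left hle1 ht0.le
    have e2 := mul_le_mul_of_nonneg_left hle2 h1t.le
    linarith
  linarith

end Stmt18Aux

open Finset in
set_option maxHeartbeats 1000000 in
/-- The piecewise-linear function `f(π) = Γπ + ∑_l g_l(π)`, where `g_l(π)` is
the value of the packing LP on tool set `T_l`, attains its minimum over `[0,1]`
at some `π ∈ {0} ∪ {1/p : p ∈ [n]}`. -/
theorem stmt18 (n L : ℕ) (T : Fin L → Finset (Fin n))
    (hT : ∀ l, (T l).Nonempty) (hn : n = ∑ l, (T l).card)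
    (cb d : Fin n → ℝ) (hcb : ∀ j, 0 ≤ cb j) (hd : ∀ j, 0 ≤ d j)
    (Γ : ℝ) (hΓ : 0 ≤ Γ)
    (g : Fin L → ℝ → ℝ)
    (hg : ∀ l π, g l π = sInf {v : ℝ | ∃ u w : Fin n → ℝ,
      (∀ j ∈ T l, 0 ≤ u j ∧ u j ≤ π ∧ 0 ≤ w j ∧ w j ≤ 1 - π) ∧
      (∑ j ∈ T l, (u j + w j)) = 1 ∧
      v = ∑ j ∈ T l, (cb j * u j + (cb j + d j) * w j)})
    (f : ℝ → ℝ) (hf : ∀ π, f π = Γ * π + ∑ l, g l π) :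
    ∃ π ∈ Set.Icc (0 : ℝ) 1,
      (π = 0 ∨ ∃ p : ℕ, 1 ≤ p ∧ p ≤ n ∧ π = 1 / (p : ℝ)) ∧
      ∀ π' ∈ Set.Icc (0 : ℝ) 1, f π ≤ f π' := by
  classical
  have key : ∀ (Tl : Finset (Fin n)), Tl.Nonempty → ∀ {π1 π2 t : ℝ}, 0 ≤ π1 → π1 < π2 → π2 ≤ 1 →
      0 < t → t < 1 →
      (∀ a b : ℕ, a ≤ Tl.card → b ≤ Tl.card →
        (a : ℝ) * π1 + (b : ℝ) * (1 - π1) < 1 → (a : ℝ) * π2 + (b : ℝ) * (1 - π2) ≤ 1) →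
      t * sInf {v : ℝ | ∃ u w : Fin n → ℝ,
        (∀ j ∈ Tl, 0 ≤ u j ∧ u j ≤ π1 ∧ 0 ≤ w j ∧ w j ≤ 1 - π1) ∧
        (∑ j ∈ Tl, (u j + w j)) = 1 ∧
        v = ∑ j ∈ Tl, (cb j * u j + (cb j + d j) * w j)}
      + (1 - t) * sInf {v : ℝ | ∃ u w : Fin n → ℝ,
        (∀ j ∈ Tl, 0 ≤ u j ∧ u j ≤ π2 ∧ 0 ≤ w j ∧ w j ≤ 1 - π2) ∧
        (∑ j ∈ Tl, (u j + w j)) = 1 ∧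
        v = ∑ j ∈ Tl, (cb j * u j + (cb j + d j) * w j)}
      ≤ sInf {v : ℝ | ∃ u w : Fin n → ℝ,
        (∀ j ∈ Tl, 0 ≤ u j ∧ u j ≤ t * π1 + (1 - t) * π2 ∧ 0 ≤ w j
          ∧ w j ≤ 1 - (t * π1 + (1 - t) * π2)) ∧
        (∑ j ∈ Tl, (u j + w j)) = 1 ∧
        v = ∑ j ∈ Tl, (cb j * u j + (cb j + d j) * w j)} := by
    intro Tl hTl π1 π2 t h1 h2 h3 h4 h5 H
    exact Stmt18Aux.key Tl hTl cb d hcb hd h1 h2 h3 h4 h5 H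
  rcases Nat.eq_zero_or_pos n with hn0 | hn1
  · refine ⟨0, ⟨le_refl 0, zero_le_one⟩, Or.inl rfl, ?_⟩
    intro π' hπ'
    have hgz : ∀ π : ℝ, ∑ l, g l π = 0 := by
      intro π
      refine Finset.sum_eq_zero fun l _ => ?_
      obtain ⟨j, -⟩ := hT l
      exact absurd j.isLt (by omega)
    rw [hf, hf, hgz, hgz]
    have h0 := hπ'.1
    nlinarith
  -- n ≥ 1
  have hcard : ∀ l, (T l).card ≤ n := by
    intro l
    have h := Finset.single_le_sum (f := fun l => (T l).card) (fun _ _ => Nat.zero_le _)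
      (Finset.mem_univ l)
    rw [← hn] at h
    exact h
  have hconc : ∀ π1 π2 t : ℝ, 0 ≤ π1 → π1 < π2 → π2 ≤ 1 → 0 < t → t < 1 →
      (∀ a b : ℕ, a ≤ n → b ≤ n →
        (a:ℝ)*π1 + (b:ℝ)*(1-π1) < 1 → (a:ℝ)*π2 + (b:ℝ)*(1-π2) ≤ 1) →
      t * f π1 + (1-t) * f π2 ≤ f (t*π1 + (1-t)*π2) := by
    intro π1 π2 t h0 h12 h21 ht0 ht1 H
    have hkey : ∀ l : Fin L, t * g l π1 + (1-t) * g l π2 ≤ g l (t*π1+(1-t)*π2) := by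
      intro l
      rw [hg, hg, hg]
      exact key (T l) (hT l) h0 h12 h21 ht0 ht1
        (fun a b ha hb => H a b (ha.trans (hcard l)) (hb.trans (hcard l)))
    have hsum := Finset.sum_le_sum (fun l (_ : l ∈ Finset.univ) => hkey l)
    rw [Finset.sum_add_distrib, ← Finset.mul_sum, ← Finset.mul_sum] at hsum
    rw [hf, hf, hf]
    nlinarith [hsum]
  clear key
  set Cs : Finset ℝ := insert 0 ((Finset.Icc 1 n).image (fun p : ℕ => 1 / (p:ℝ))) with hCs
  have h0C : (0:ℝ) ∈ Cs := Finset.mem_insert_self _ _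
  have hmemC : ∀ p : ℕ, 1 ≤ p → p ≤ n → (1/(p:ℝ)) ∈ Cs := fun p h1 h2 =>
    Finset.mem_insert_of_mem (Finset.mem_image.2 ⟨p, Finset.mem_Icc.2 ⟨h1, h2⟩, rfl⟩)
  obtain ⟨πs, hπsC, hπsmin⟩ := Finset.exists_min_image Cs f ⟨0, h0C⟩
  have hprops : ∀ x ∈ Cs, x ∈ Set.Icc (0:ℝ) 1 ∧
      (x = 0 ∨ ∃ p : ℕ, 1 ≤ p ∧ p ≤ n ∧ x = 1/(p:ℝ)) := by
    intro x hx
    rcases Finset.mem_insert.1 hx with rfl | hx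
    · exact ⟨⟨le_refl 0, zero_le_one⟩, Or.inl rfl⟩
    · obtain ⟨p, hp, rfl⟩ := Finset.mem_image.1 hx
      obtain ⟨hp1, hpn⟩ := Finset.mem_Icc.1 hp
      have hp0 : (0:ℝ) < p := by exact_mod_cast Nat.lt_of_lt_of_le Nat.zero_lt_one hp1
      refine ⟨⟨by positivity, ?_⟩, Or.inr ⟨p, hp1, hpn, rfl⟩⟩
      rw [div_le_one hp0]
      exact_mod_cast hp1
  refine ⟨πs, (hprops πs hπsC).1, (hprops πs hπsC).2, ?_⟩
  intro π' hπ'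
  suffices h : ∃ c ∈ Cs, f c ≤ f π' by
    obtain ⟨c, hcC, hc⟩ := h
    exact le_trans (hπsmin c hcC) hc
  by_cases hmem : π' ∈ Cs
  · exact ⟨π', hmem, le_refl _⟩
  have h1C : (1:ℝ) ∈ Cs := by simpa using hmemC 1 (le_refl 1) hn1
  have hπ'0 : 0 < π' := lt_of_le_of_ne hπ'.1 (fun h => hmem (by rw [← h]; exact h0C))
  have hπ'1 : π' < 1 := lt_of_le_of_ne hπ'.2 (fun h => hmem (by rw [h]; exact h1C))
  set q := ⌊1/π'⌋₊ with hq
  have hfl : (q:ℝ) ≤ 1/π' := Nat.floor_le (by positivity)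
  have hfl2 : 1/π' < (q:ℝ) + 1 := Nat.lt_floor_add_one _
  have hq1 : 1 ≤ q := Nat.le_floor (by rw [Nat.cast_one, le_div_iff₀ hπ'0]; linarith)
  have hqR : (0:ℝ) < q := by exact_mod_cast hq1
  have hπ'le : π' ≤ 1/(q:ℝ) := by
    rw [le_div_iff₀ hqR]
    rw [le_div_iff₀ hπ'0] at hfl
    linarith
  have hπ'gt : 1/((q:ℝ)+1) < π' := by
    rw [div_lt_iff₀ (by positivity)]
    rw [div_lt_iff₀ hπ'0] at hfl2
    linarith
  by_cases hqn : n ≤ q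
  · -- π' ∈ (0, 1/n)
    have hnR : (0:ℝ) < n := by exact_mod_cast hn1
    have h1nC : (1:ℝ)/(n:ℝ) ∈ Cs := hmemC n hn1 (le_refl n)
    have hlt : π' < 1/(n:ℝ) := by
      have hle : π' ≤ 1/(n:ℝ) :=
        le_trans hπ'le (one_div_le_one_div_of_le hnR (by exact_mod_cast hqn))
      exact lt_of_le_of_ne hle (fun h => hmem (by rw [h]; exact h1nC))
    set π2 := 1/(n:ℝ) with hπ2d
    have hπ2pos : 0 < π2 := by positivity
    set t := (π2 - π')/π2 with htd
    have ht0 : 0 < t := div_pos (by linarith) hπ2pos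
    have ht1 : t < 1 := by rw [htd, div_lt_one hπ2pos]; linarith
    have hrepr : t*0 + (1-t)*π2 = π' := by
      rw [htd]; field_simp; ring
    have H : ∀ a b : ℕ, a ≤ n → b ≤ n →
        (a:ℝ)*0 + (b:ℝ)*(1-0) < 1 → (a:ℝ)*π2 + (b:ℝ)*(1-π2) ≤ 1 := by
      intro a b han hbn hlt'
      have hb0 : b = 0 := by
        by_contra hb
        have hb1 : (1:ℝ) ≤ b := by exact_mod_cast Nat.one_le_iff_ne_zero.2 hb
        nlinarith
      subst hb0
      have haR : (a:ℝ) ≤ n := by exact_mod_cast han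
      rw [hπ2d]
      push_cast
      rw [zero_mul, add_zero, mul_one_div, div_le_one hnR]
      exact haR
    have hcc := hconc 0 π2 t (le_refl 0) hπ2pos
      (by rw [hπ2d, div_le_one hnR]; exact_mod_cast hn1) ht0 ht1 H
    rw [hrepr] at hcc
    clear hconc
    rcases le_total (f 0) (f π2) with hc | hc
    · refine ⟨0, h0C, ?_⟩
      nlinarith [mul_nonneg (by linarith : (0:ℝ) ≤ 1-t) (by linarith : (0:ℝ) ≤ f π2 - f 0)]
    · refine ⟨π2, h1nC, ?_⟩
      nlinarith [mul_nonneg ht0.le (by linarith : (0:ℝ) ≤ f 0 - f π2)]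
  · push_neg at hqn
    have hq1n : q + 1 ≤ n := hqn
    have hqR1 : (0:ℝ) < (q:ℝ)+1 := by positivity
    have h1qC : (1:ℝ)/(q:ℝ) ∈ Cs := hmemC q hq1 (le_of_lt hqn)
    have h1q1C : (1:ℝ)/((q:ℝ)+1) ∈ Cs := by
      have h := hmemC (q+1) (by omega) hq1n
      push_cast at h
      exact h
    have hπ'lt : π' < 1/(q:ℝ) := lt_of_le_of_ne hπ'le (fun h => hmem (by rw [h]; exact h1qC))
    set π1 := 1/((q:ℝ)+1) with hπ1d
    set π2 := 1/(q:ℝ) with hπ2d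
    have h12 : π1 < π2 := by
      rw [hπ1d, hπ2d, div_lt_div_iff₀ hqR1 hqR]
      linarith
    set t := (π2 - π')/(π2 - π1) with htd
    have hsub : (0:ℝ) < π2 - π1 := by linarith
    have ht0 : 0 < t := div_pos (by linarith) hsub
    have ht1 : t < 1 := by rw [htd, div_lt_one hsub]; linarith
    have hrepr : t*π1 + (1-t)*π2 = π' := by
      rw [htd]; field_simp; ring
    have H : ∀ a b : ℕ, a ≤ n → b ≤ n →
        (a:ℝ)*π1 + (b:ℝ)*(1-π1) < 1 → (a:ℝ)*π2 + (b:ℝ)*(1-π2) ≤ 1 := by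
      intro a b _ _ hlt'
      have hq0 : ((q:ℝ)) ≠ 0 := ne_of_gt hqR
      have hq10 : ((q:ℝ)+1) ≠ 0 := ne_of_gt hqR1
      have e1 : (a:ℝ)*π1 + (b:ℝ)*(1-π1) = ((a:ℝ) + (b:ℝ)*(q:ℝ))/((q:ℝ)+1) := by
        rw [hπ1d]; field_simp; ring
      rw [e1, div_lt_one hqR1] at hlt'
      have hnat : a + b*q < q + 1 := by exact_mod_cast hlt'
      have hnat' : (a:ℝ) + (b:ℝ)*(q:ℝ) ≤ (q:ℝ) := by
        have h := Nat.lt_succ_iff.1 hnat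
        exact_mod_cast h
      have e2 : (a:ℝ)*π2 + (b:ℝ)*(1-π2) = ((a:ℝ) + (b:ℝ)*(q:ℝ) - (b:ℝ))/(q:ℝ) := by
        rw [hπ2d]; field_simp; ring
      rw [e2, div_le_one hqR]
      have hb0 : (0:ℝ) ≤ b := Nat.cast_nonneg b
      linarith
    have hcc := hconc π1 π2 t (by rw [hπ1d]; positivity) h12
      (by rw [hπ2d, div_le_one hqR]; exact_mod_cast hq1) ht0 ht1 H
    rw [hrepr] at hcc
    clear hconc
    rcases le_total (f π1) (f π2) with hc | hc
    · refine ⟨π1, h1q1C, ?_⟩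
      nlinarith [mul_nonneg (by linarith : (0:ℝ) ≤ 1-t) (by linarith : (0:ℝ) ≤ f π2 - f π1)]
    · refine ⟨π2, h1qC, ?_⟩
      nlinarith [mul_nonneg ht0.le (by linarith : (0:ℝ) ≤ f π1 - f π2)]
end
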